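/- arXiv:1001.1060 — 10 statements merged into one kernel-verified Lean document; each statement's English description precedes it below -/
import Mathlib

section
/- Let Ω ⊆ ℂ be a nonempty open connected set and u : ℂ → ℝ a roof function on Ω (harmonic and positive on Ω, continuously differentiable on the closure of Ω, vanishing on ∂Ω, with gradient of norm 1 on ∂Ω). Assume moreover that the partial derivative of u in the first real coordinate satisfies ∂u/∂x > 0 at every point of Ω, and that there exists a holomorphic bijection Ψ from the right half-plane ℂ⁺ = {z ∈ ℂ : Re z > 0} onto Ω which extends to a continuous map from the closed half-plane onto the closure of Ω sending the imaginary axis into ∂Ω. Then Ω is an open half-plane: there exist a ∈ ℂ with |a| = 1 and c ∈ ℝ such that Ω = {z ∈ ℂ : Re(a·z) + c > 0}. -/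
open Real

/-- A function `u : ℂ → ℝ` is harmonic on a set `Ω`: twice continuously
differentiable on `Ω` with vanishing Laplacian there. -/
def HarmonicOnSet (u : ℂ → ℝ) (Ω : Set ℂ) : Prop :=
  ContDiffOn ℝ 2 u Ω ∧
  ∀ z ∈ Ω,
    fderiv ℝ (fun w => fderiv ℝ u w 1) z 1 +
      fderiv ℝ (fun w => fderiv ℝ u w Complex.I) z Complex.I = 0

/-- `u` is a roof function on `Ω`: harmonic and positive on `Ω`, `C¹` on the
closure, vanishing on the frontier, with gradient of norm `1` on the frontier. -/
def IsRoofFunction (Ω : Set ℂ) (u : ℂ → ℝ) : Prop :=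
  HarmonicOnSet u Ω ∧
  (∀ z ∈ Ω, 0 < u z) ∧
  ContDiffOn ℝ 1 u (closure Ω) ∧
  (∀ z ∈ frontier Ω, u z = 0) ∧
  (∀ z ∈ frontier Ω, ‖fderiv ℝ u z‖ = 1)

namespace BernsteinAux
open Complex Topology Filter Set Metric

/-- The "conjugate gradient" complex number attached to a real-linear functional on `ℂ`. -/
noncomputable def gradC (L : ℂ →L[ℝ] ℝ) : ℂ := (L 1 : ℂ) - Complex.I * (L Complex.I)

lemma re_gradC_mul (L : ℂ →L[ℝ] ℝ) (z : ℂ) : (gradC L * z).re = L z := by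
  have hz : z = z.re • (1 : ℂ) + z.im • Complex.I := by
    simp [Complex.real_smul, Complex.re_add_im]
  rw [hz, map_add, map_smul, map_smul]
  simp [gradC, Complex.ext_iff]
  ring

lemma re_gradC (L : ℂ →L[ℝ] ℝ) : (gradC L).re = L 1 := by simp [gradC]

lemma norm_gradC (L : ℂ →L[ℝ] ℝ) : ‖gradC L‖ = ‖L‖ := by
  rcases eq_or_ne (gradC L) 0 with h0 | h0
  · have hL : L = 0 := by
      ext1 z
      have := re_gradC_mul L z
      rw [h0] at this
      simpa using this.symm
    simp [h0, hL, gradC]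
  · apply le_antisymm
    · have h1 : L ((starRingEnd ℂ) (gradC L)) ≤ ‖L‖ * ‖gradC L‖ := by
        refine le_trans (le_abs_self _) ?_
        simpa using (L.le_opNorm ((starRingEnd ℂ) (gradC L)))
      have h2 : L ((starRingEnd ℂ) (gradC L)) = ‖gradC L‖ ^ 2 := by
        rw [← re_gradC_mul L]
        rw [Complex.mul_conj]
        rw [Complex.ofReal_re, Complex.normSq_eq_norm_sq]
      nlinarith [norm_pos_iff.mpr h0, norm_nonneg (gradC L)]
    · refine L.opNorm_le_bound (norm_nonneg _) fun z => ?_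
      rw [← re_gradC_mul L z]
      calc |(gradC L * z).re| ≤ ‖gradC L * z‖ := Complex.abs_re_le_norm _
        _ = ‖gradC L‖ * ‖z‖ := by simp

/-- Continuous extension of `fderiv ℝ u` to the closure of `Ω`. -/
noncomputable def Fext (u : ℂ → ℝ) (Ω : Set ℂ) (w : ℂ) : ℂ →L[ℝ] ℝ :=
  limUnder (𝓝[Ω] w) (fderiv ℝ u)

variable {u : ℂ → ℝ} {Ω : Set ℂ}

lemma Fext_eq_on (hopen : IsOpen Ω) (h2 : ContDiffOn ℝ 2 u Ω) :
    ∀ z ∈ Ω, Fext u Ω z = fderiv ℝ u z := by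
  intro z hz
  haveI : (𝓝[Ω] z).NeBot := mem_closure_iff_nhdsWithin_neBot.mp (subset_closure hz)
  have hC : ContinuousOn (fderiv ℝ u) Ω :=
    h2.continuousOn_fderiv_of_isOpen hopen (by norm_num)
  exact (hC z hz).tendsto.limUnder_eq

lemma exists_localG (h1 : ContDiffOn ℝ 1 u (closure Ω)) {w : ℂ} (hw : w ∈ closure Ω) :
    ∃ v : Set ℂ, IsOpen v ∧ w ∈ v ∧ ∃ G : ℂ → (ℂ →L[ℝ] ℝ),
      ContinuousOn G (closure Ω ∩ v) ∧
      (∀ x ∈ closure Ω ∩ v, HasFDerivWithinAt u (G x) (closure Ω ∩ v) x) := by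
  obtain ⟨t, ht, q, hq⟩ := (h1 w hw) 1 le_rfl
  rw [insert_eq_of_mem hw] at ht
  obtain ⟨v, hvopen, hwv, hvt⟩ := mem_nhdsWithin.mp ht
  refine ⟨v, hvopen, hwv, fun x => continuousMultilinearCurryFin1 ℝ ℂ ℝ (q x 1), ?_, ?_⟩
  · have hsub : closure Ω ∩ v ⊆ t := fun x hx => hvt ⟨hx.2, hx.1⟩
    exact ((continuousMultilinearCurryFin1 ℝ ℂ ℝ).continuous.comp_continuousOn
      ((hq.cont 1 le_rfl).mono hsub))
  · intro x hx
    have hsub : closure Ω ∩ v ⊆ t := fun y hy => hvt ⟨hy.2, hy.1⟩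
    exact (hq.hasFDerivWithinAt (by norm_num) (hsub hx)).mono hsub

lemma Fext_eq_localG (hopen : IsOpen Ω)
    {v : Set ℂ} (hvopen : IsOpen v) {G : ℂ → (ℂ →L[ℝ] ℝ)}
    (hGc : ContinuousOn G (closure Ω ∩ v))
    (hGd : ∀ x ∈ closure Ω ∩ v, HasFDerivWithinAt u (G x) (closure Ω ∩ v) x) :
    ∀ x ∈ closure Ω ∩ v, Fext u Ω x = G x := by
  intro x hx
  haveI : (𝓝[Ω] x).NeBot := mem_closure_iff_nhdsWithin_neBot.mp hx.1
  have hGf : ∀ y ∈ Ω ∩ v, G y = fderiv ℝ u y := by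
    intro y hy
    have hmem : closure Ω ∩ v ∈ 𝓝 y :=
      Filter.mem_of_superset ((hopen.inter hvopen).mem_nhds hy)
        (fun z hz => ⟨subset_closure hz.1, hz.2⟩)
    exact ((hGd y ⟨subset_closure hy.1, hy.2⟩).hasFDerivAt hmem).fderiv.symm
  have htG : Filter.Tendsto G (𝓝[Ω ∩ v] x) (𝓝 (G x)) :=
    ((hGc x hx).mono (fun y hy => ⟨subset_closure hy.1, hy.2⟩) : _)
  have htf : Filter.Tendsto (fderiv ℝ u) (𝓝[Ω ∩ v] x) (𝓝 (G x)) := by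
    refine htG.congr' ?_
    filter_upwards [self_mem_nhdsWithin] with y hy using hGf y hy
  have hrw : 𝓝[Ω] x = 𝓝[Ω ∩ v] x := nhdsWithin_restrict' Ω (hvopen.mem_nhds hx.2)
  exact (hrw ▸ htf).limUnder_eq

lemma Fext_cont (hopen : IsOpen Ω) (h2 : ContDiffOn ℝ 2 u Ω)
    (h1 : ContDiffOn ℝ 1 u (closure Ω)) :
    ContinuousOn (Fext u Ω) (closure Ω) := by
  intro w hw
  obtain ⟨v, hvopen, hwv, G, hGc, hGd⟩ := exists_localG h1 hw
  have heq := Fext_eq_localG hopen hvopen hGc hGd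
  have : ContinuousWithinAt (Fext u Ω) (closure Ω ∩ v) w :=
    ((hGc w ⟨hw, hwv⟩).congr (fun y hy => heq y hy) (heq w ⟨hw, hwv⟩))
  exact (continuousWithinAt_inter (hvopen.mem_nhds hwv)).mp this

lemma Fext_hasFDeriv (hopen : IsOpen Ω)
    (h1 : ContDiffOn ℝ 1 u (closure Ω)) :
    ∀ w ∈ closure Ω, HasFDerivWithinAt u (Fext u Ω w) (closure Ω) w := by
  intro w hw
  obtain ⟨v, hvopen, hwv, G, hGc, hGd⟩ := exists_localG h1 hw
  have heq := Fext_eq_localG hopen hvopen hGc hGd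
  have h := hGd w ⟨hw, hwv⟩
  rw [← heq w ⟨hw, hwv⟩] at h
  refine h.mono_of_mem_nhdsWithin ?_
  exact mem_nhdsWithin.mpr ⟨v, hvopen, hwv, fun y hy => ⟨hy.2, hy.1⟩⟩

lemma exists_good (hopen : IsOpen Ω) {w : ℂ} (hw : w ∈ frontier Ω) {ε : ℝ} (hε : 0 < ε) :
    ∃ w' ∈ frontier Ω, dist w' w < ε ∧ UniqueDiffWithinAt ℝ (closure Ω) w' := by
  have hwc : w ∈ closure Ω := frontier_subset_closure hw
  have hwns : w ∉ Ω := fun h => hw.2 (by rwa [hopen.interior_eq])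
  obtain ⟨x, hxΩ, hxd⟩ := Metric.mem_closure_iff.mp hwc (ε / 2) (by linarith)
  set ρ := infDist x Ωᶜ with hρdef
  have hρpos : 0 < ρ :=
    (hopen.isClosed_compl.notMem_iff_infDist_pos ⟨w, hwns⟩).mp (by simpa using hxΩ)
  have hρle : ρ ≤ dist x w := infDist_le_dist_of_mem hwns
  have hball : ball x ρ ⊆ Ω := by
    intro y hy
    by_contra hyn
    exact absurd (infDist_le_dist_of_mem (s := Ωᶜ) hyn) (not_le.mpr (mem_ball'.mp hy))
  obtain ⟨w', hw'c, hdist⟩ :=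
    (hopen.isClosed_compl).exists_infDist_eq_dist ⟨w, hwns⟩ x
  have hdw' : dist x w' = ρ := hdist.symm
  have hcb : closedBall x ρ ⊆ closure Ω := by
    rw [← closure_ball x (ne_of_gt hρpos)]
    exact closure_mono hball
  have hw'cb : w' ∈ closedBall x ρ := by
    rw [mem_closedBall, dist_comm, hdw']
  refine ⟨w', ?_, ?_, ?_⟩
  · rw [hopen.frontier_eq]
    exact ⟨hcb hw'cb, hw'c⟩
  · calc dist w' w ≤ dist w' x + dist x w := dist_triangle _ _ _
      _ < ε := by
        rw [dist_comm, hdw']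
        linarith [hxd, hρle, dist_comm w x ▸ hxd]
  · refine UniqueDiffWithinAt.mono ?_ hcb
    exact (uniqueDiffOn_convex (convex_closedBall x ρ)
      (by rw [interior_closedBall x (ne_of_gt hρpos)]; exact ⟨x, mem_ball_self hρpos⟩)) w' hw'cb

lemma norm_Fext_good (hopen : IsOpen Ω)
    (h1 : ContDiffOn ℝ 1 u (closure Ω))
    (hnorm : ∀ z ∈ frontier Ω, ‖fderiv ℝ u z‖ = 1)
    {w' : ℂ} (hw' : w' ∈ frontier Ω) (hU : UniqueDiffWithinAt ℝ (closure Ω) w') :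
    ‖Fext u Ω w'‖ = 1 := by
  have hdiff : DifferentiableAt ℝ u w' := by
    by_contra h
    have h0 := fderiv_zero_of_not_differentiableAt h
    have h1' := hnorm w' hw'
    rw [h0] at h1'
    simp at h1'
  have hfull : HasFDerivWithinAt u (fderiv ℝ u w') (closure Ω) w' :=
    hdiff.hasFDerivAt.hasFDerivWithinAt
  have heq : Fext u Ω w' = fderiv ℝ u w' :=
    hU.eq (Fext_hasFDeriv hopen h1 w' (frontier_subset_closure hw')) hfull
  rw [heq]; exact hnorm w' hw'

lemma norm_Fext_frontier (hopen : IsOpen Ω) (h2 : ContDiffOn ℝ 2 u Ω)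
    (h1 : ContDiffOn ℝ 1 u (closure Ω))
    (hnorm : ∀ z ∈ frontier Ω, ‖fderiv ℝ u z‖ = 1) :
    ∀ w ∈ frontier Ω, ‖Fext u Ω w‖ = 1 := by
  intro w hw
  set S : Set ℂ := {w' | w' ∈ frontier Ω ∧ ‖Fext u Ω w'‖ = 1} with hS
  have hwS : w ∈ closure S := by
    rw [Metric.mem_closure_iff]
    intro ε hε
    obtain ⟨w', hw'f, hd, hU⟩ := exists_good hopen hw hε
    exact ⟨w', ⟨hw'f, norm_Fext_good hopen h1 hnorm hw'f hU⟩, by rwa [dist_comm]⟩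
  haveI : (𝓝[S] w).NeBot := mem_closure_iff_nhdsWithin_neBot.mp hwS
  have hSsub : S ⊆ closure Ω := fun y hy => frontier_subset_closure hy.1
  have ht1 : Filter.Tendsto (fun x => ‖Fext u Ω x‖) (𝓝[S] w) (𝓝 ‖Fext u Ω w‖) :=
    (((Fext_cont hopen h2 h1) w (frontier_subset_closure hw)).mono hSsub).norm
  have ht2 : Filter.Tendsto (fun x => ‖Fext u Ω x‖) (𝓝[S] w) (𝓝 1) := by
    refine Filter.Tendsto.congr' ?_ tendsto_const_nhds
    filter_upwards [self_mem_nhdsWithin] with y hy using hy.2.symm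
  exact tendsto_nhds_unique ht1 ht2

lemma re_Fext_nonneg (hopen : IsOpen Ω) (h2 : ContDiffOn ℝ 2 u Ω)
    (h1 : ContDiffOn ℝ 1 u (closure Ω))
    (hux : ∀ z ∈ Ω, 0 < fderiv ℝ u z 1) :
    ∀ w ∈ closure Ω, 0 ≤ Fext u Ω w 1 := by
  intro w hw
  haveI : (𝓝[Ω] w).NeBot := mem_closure_iff_nhdsWithin_neBot.mp hw
  have ht : Filter.Tendsto (fun x => Fext u Ω x 1) (𝓝[Ω] w) (𝓝 (Fext u Ω w 1)) := by
    have := ((Fext_cont hopen h2 h1) w hw).mono (subset_closure (s := Ω))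
    exact ((ContinuousLinearMap.apply ℝ ℝ (1 : ℂ)).continuous.tendsto _).comp this
  refine ge_of_tendsto ht ?_
  filter_upwards [self_mem_nhdsWithin] with y hy
  rw [Fext_eq_on hopen h2 y hy]
  exact (hux y hy).le

lemma pdiff (hopen : IsOpen Ω)
    (h2 : ContDiffOn ℝ 2 u Ω)
    (hlap : ∀ z ∈ Ω,
      fderiv ℝ (fun w => fderiv ℝ u w 1) z 1 +
        fderiv ℝ (fun w => fderiv ℝ u w Complex.I) z Complex.I = 0) :
    DifferentiableOn ℂ (fun z => gradC (fderiv ℝ u z)) Ω := by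
  intro z hz
  have hCA : ContDiffAt ℝ 2 u z := h2.contDiffAt (hopen.mem_nhds hz)
  have hd1 : ContDiffAt ℝ 1 (fderiv ℝ u) z := hCA.fderiv_right (le_refl _)
  have hdd : DifferentiableAt ℝ (fderiv ℝ u) z := hd1.differentiableAt (by norm_num)
  set D := fderiv ℝ (fderiv ℝ u) z with hD
  have hDd : HasFDerivAt (fderiv ℝ u) D z := hdd.hasFDerivAt
  have h1' : HasFDerivAt (fun w => fderiv ℝ u w 1)
      ((ContinuousLinearMap.apply ℝ ℝ (1 : ℂ)).comp D) z :=
    (ContinuousLinearMap.apply ℝ ℝ (1 : ℂ)).hasFDerivAt.comp z hDd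
  have hI' : HasFDerivAt (fun w => fderiv ℝ u w Complex.I)
      ((ContinuousLinearMap.apply ℝ ℝ (Complex.I)).comp D) z :=
    (ContinuousLinearMap.apply ℝ ℝ (Complex.I)).hasFDerivAt.comp z hDd
  have hlapD : D 1 1 + D Complex.I Complex.I = 0 := by
    have := hlap z hz
    rw [h1'.fderiv, hI'.fderiv] at this
    simpa using this
  have hsymm : D Complex.I 1 = D 1 Complex.I := by
    have hev : ∀ᶠ y in 𝓝 z, HasFDerivAt u (fderiv ℝ u y) y := by
      filter_upwards [hopen.mem_nhds hz] with y hy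
      exact ((h2.contDiffAt (hopen.mem_nhds hy)).differentiableAt (by norm_num)).hasFDerivAt
    exact (second_derivative_symmetric_of_eventually hev hDd Complex.I 1)
  have hA : HasFDerivAt (fun w => ((fderiv ℝ u w 1 : ℝ) : ℂ))
      (Complex.ofRealCLM.comp ((ContinuousLinearMap.apply ℝ ℝ (1 : ℂ)).comp D)) z :=
    Complex.ofRealCLM.hasFDerivAt.comp z h1'
  have hB : HasFDerivAt (fun w => ((fderiv ℝ u w Complex.I : ℝ) : ℂ))
      (Complex.ofRealCLM.comp ((ContinuousLinearMap.apply ℝ ℝ (Complex.I)).comp D)) z :=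
    Complex.ofRealCLM.hasFDerivAt.comp z hI'
  have hp : HasFDerivAt (fun w => gradC (fderiv ℝ u w))
      (Complex.ofRealCLM.comp ((ContinuousLinearMap.apply ℝ ℝ (1 : ℂ)).comp D) -
        Complex.I • (Complex.ofRealCLM.comp ((ContinuousLinearMap.apply ℝ ℝ (Complex.I)).comp D)))
      z := by
    exact hA.sub (hB.const_mul Complex.I)
  set E := Complex.ofRealCLM.comp ((ContinuousLinearMap.apply ℝ ℝ (1 : ℂ)).comp D) -
        Complex.I • (Complex.ofRealCLM.comp ((ContinuousLinearMap.apply ℝ ℝ (Complex.I)).comp D))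
    with hE
  set c : ℂ := (D 1 1 : ℂ) - Complex.I * (D 1 Complex.I) with hc
  have hEc : ∀ v : ℂ, E v = c * v := by
    intro v
    have hv : v = v.re • (1 : ℂ) + v.im • Complex.I := by
      simp [Complex.real_smul, Complex.re_add_im]
    have hDv : D v = v.re • D 1 + v.im • D Complex.I := by
      conv_lhs => rw [hv]
      rw [map_add, map_smul, map_smul]
    have hII : D Complex.I Complex.I = -(D 1 1) := by linarith [hlapD]
    simp only [hE, ContinuousLinearMap.sub_apply, ContinuousLinearMap.smul_apply,
      ContinuousLinearMap.comp_apply, ContinuousLinearMap.apply_apply,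
      Complex.ofRealCLM_apply, hDv, ContinuousLinearMap.add_apply]
    rw [hsymm, hII]
    simp [hc, Complex.ext_iff]
    constructor <;> ring
  have hder : HasDerivAt (fun w => gradC (fderiv ℝ u w)) c z := by
    rw [hasDerivAt_iff_isLittleO]
    have hlo := hp.isLittleO
    refine hlo.congr' ?_ (Filter.EventuallyEq.refl _ _)
    filter_upwards with x
    rw [hEc, smul_eq_mul, mul_comm]
  exact hder.differentiableAt.differentiableWithinAt

lemma re_eq_zero_of_PL {g : ℂ → ℂ} (hd : DifferentiableOn ℂ g {z : ℂ | 0 < z.re})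
    (hc : ContinuousOn g {z : ℂ | 0 ≤ z.re})
    (habs : ∀ ζ : ℂ, 0 ≤ ζ.re → ‖g ζ‖ ≤ 1)
    (hbd : ∀ ζ : ℂ, ζ.re = 0 → (g ζ).re = 0) :
    ∀ ζ : ℂ, 0 ≤ ζ.re → (g ζ).re = 0 := by
  have key : ∀ l : ℝ, ∀ ζ : ℂ, 0 ≤ ζ.re → l * (g ζ).re ≤ 0 := by
    intro l ζ hζ
    set h : ℂ → ℂ := fun ζ => Complex.exp ((l : ℂ) * g ζ) with hh
    have hnorm : ∀ ζ : ℂ, ‖h ζ‖ = Real.exp (l * (g ζ).re) := by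
      intro ζ
      rw [hh]
      simp only [Complex.norm_exp, Complex.re_ofReal_mul]
    have hboundU : ∀ ζ : ℂ, 0 ≤ ζ.re → ‖h ζ‖ ≤ Real.exp |l| := by
      intro ζ hζ
      rw [hnorm]
      apply Real.exp_le_exp.mpr
      calc l * (g ζ).re ≤ |l * (g ζ).re| := le_abs_self _
        _ = |l| * |(g ζ).re| := abs_mul _ _
        _ ≤ |l| * 1 := by
            refine mul_le_mul_of_nonneg_left ?_ (abs_nonneg l)
            exact (Complex.abs_re_le_norm _).trans (habs ζ hζ)
        _ = |l| := mul_one _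
    have hD : DiffContOnCl ℂ h {z : ℂ | 0 < z.re} := by
      constructor
      · exact ((hd.const_mul _).cexp)
      · rw [Complex.closure_setOf_lt_re]
        exact (continuousOn_const.mul hc).cexp
    have hPL : ‖h ζ‖ ≤ 1 := by
      refine PhragmenLindelof.right_half_plane_of_bounded_on_real hD ?_ ?_ ?_ hζ
      · refine ⟨1, one_lt_two, 0, Asymptotics.IsBigO.of_bound (Real.exp |l|) ?_⟩
        rw [Filter.eventually_inf_principal]
        filter_upwards with z hz
        simp only [zero_mul, Real.exp_zero, norm_one, mul_one]
        exact hboundU z (le_of_lt hz)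
      · refine ⟨Real.exp |l|, ?_⟩
        rw [Filter.eventually_map]
        filter_upwards [Filter.eventually_ge_atTop (0 : ℝ)] with x hx
        exact hboundU x (by simpa using hx)
      · intro x
        rw [hnorm]
        have : ((x : ℂ) * Complex.I).re = 0 := by simp
        rw [hbd _ this, mul_zero, Real.exp_zero]
    rw [hnorm] at hPL
    exact (Real.exp_le_one_iff).mp hPL
  intro ζ hζ
  have h1 := key 1 ζ hζ
  have h2 := key (-1) ζ hζ
  linarith

lemma upreconn : IsPreconnected {z : ℂ | 0 < z.re} := by
  refine Convex.isPreconnected ?_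
  have : {z : ℂ | 0 < z.re} = {z : ℂ | (0:ℝ) < Complex.reCLM z} := rfl
  rw [this]
  exact convex_halfSpace_gt (Complex.reCLM.toLinearMap.isLinear) 0

lemma const_of_re_eq_zero {g : ℂ → ℂ}
    (hd : DifferentiableOn ℂ g {z : ℂ | 0 < z.re})
    (hre : ∀ ζ : ℂ, 0 < ζ.re → (g ζ).re = 0) :
    ∃ w, ∀ ζ : ℂ, 0 < ζ.re → g ζ = w := by
  have hU : IsOpen {z : ℂ | 0 < z.re} := by
    exact isOpen_lt continuous_const Complex.continuous_re
  have hg : AnalyticOnNhd ℂ g {z : ℂ | 0 < z.re} := hd.analyticOnNhd hU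
  rcases hg.is_constant_or_isOpen upreconn with ⟨w, hw⟩ | hopen
  · exact ⟨w, fun ζ hζ => hw ζ hζ⟩
  · exfalso
    have h1U : (1 : ℂ) ∈ {z : ℂ | 0 < z.re} := by simp
    have hT : IsOpen (g '' {z : ℂ | 0 < z.re}) := hopen _ (subset_refl _) hU
    obtain ⟨ε, hε, hball⟩ := Metric.isOpen_iff.mp hT (g 1) ⟨1, h1U, rfl⟩
    have hmem : g 1 + (ε / 2 : ℝ) ∈ g '' {z : ℂ | 0 < z.re} := by
      apply hball
      rw [mem_ball, dist_eq_norm]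
      simp only [add_sub_cancel_left]
      rw [Complex.norm_real, Real.norm_eq_abs]
      rw [abs_of_pos (by linarith)]
      linarith
    obtain ⟨ζ, hζ, hζeq⟩ := hmem
    have h0 : (g ζ).re = 0 := hre ζ hζ
    have h0' : (g 1).re = 0 := hre 1 (by simp)
    rw [hζeq] at h0
    simp only [Complex.add_re, Complex.ofReal_re, h0'] at h0
    linarith

lemma const_on_connected {φ : ℂ → ℝ} {Ω : Set ℂ} (hopen : IsOpen Ω) (hconn : IsPreconnected Ω)
    (hder : ∀ z ∈ Ω, HasFDerivAt φ (0 : ℂ →L[ℝ] ℝ) z) {z₀ : ℂ} (hz₀ : z₀ ∈ Ω) :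
    ∀ z ∈ Ω, φ z = φ z₀ := by
  have hloc : ∀ z ∈ Ω, ∀ r > 0, ball z r ⊆ Ω → ∀ y ∈ ball z r, φ y = φ z := by
    intro z hz r hr hball y hy
    refine (convex_ball z r).is_const_of_fderivWithin_eq_zero
      (fun x hx => ((hder x (hball hx)).differentiableAt).differentiableWithinAt)
      (fun x hx => ?_) hy (mem_ball_self hr)
    rw [fderivWithin_of_isOpen isOpen_ball hx]
    exact (hder x (hball hx)).fderiv
  set A := {z ∈ Ω | φ z = φ z₀} with hA
  set B := {z ∈ Ω | φ z ≠ φ z₀} with hB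
  have hAopen : IsOpen A := by
    rw [Metric.isOpen_iff]
    rintro z ⟨hz, hφz⟩
    obtain ⟨r, hr, hball⟩ := Metric.isOpen_iff.mp hopen z hz
    exact ⟨r, hr, fun y hy => ⟨hball hy, by rw [hloc z hz r hr hball y hy, hφz]⟩⟩
  have hBopen : IsOpen B := by
    rw [Metric.isOpen_iff]
    rintro z ⟨hz, hφz⟩
    obtain ⟨r, hr, hball⟩ := Metric.isOpen_iff.mp hopen z hz
    exact ⟨r, hr, fun y hy => ⟨hball hy, by rw [hloc z hz r hr hball y hy]; exact hφz⟩⟩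
  by_contra hcon
  push_neg at hcon
  obtain ⟨z₁, hz₁, hφ₁⟩ := hcon
  have hsub : Ω ⊆ A ∪ B := by
    intro z hz
    by_cases h : φ z = φ z₀
    · exact Or.inl ⟨hz, h⟩
    · exact Or.inr ⟨hz, h⟩
  obtain ⟨z₂, _, ⟨hz₂A, hz₂B⟩⟩ :=
    hconn A B hAopen hBopen hsub ⟨z₀, hz₀, hz₀, rfl⟩ ⟨z₁, hz₁, hz₁, hφ₁⟩
  exact hz₂B.2 hz₂A.2

end BernsteinAux

open BernsteinAux Complex Topology Filter Set Metric in
/-- Bernstein type result: an exceptional domain conformal to the right half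
plane, whose roof function satisfies `∂u/∂x > 0`, is a half plane. -/
theorem bernstein_exceptional_domain
    (Ω : Set ℂ) (hne : Ω.Nonempty) (hopen : IsOpen Ω) (hconn : IsConnected Ω)
    (u : ℂ → ℝ) (hu : IsRoofFunction Ω u)
    (hux : ∀ z ∈ Ω, 0 < fderiv ℝ u z 1)
    (Ψ : ℂ → ℂ)
    (hΨholo : DifferentiableOn ℂ Ψ {z : ℂ | 0 < z.re})
    (hΨbij : Set.BijOn Ψ {z : ℂ | 0 < z.re} Ω)
    (hΨcont : ContinuousOn Ψ {z : ℂ | 0 ≤ z.re})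
    (hΨsurj : Ψ '' {z : ℂ | 0 ≤ z.re} = closure Ω)
    (hΨbd : ∀ z : ℂ, z.re = 0 → Ψ z ∈ frontier Ω) :
    ∃ (a : ℂ) (c : ℝ), ‖a‖ = 1 ∧ Ω = {z : ℂ | 0 < (a * z).re + c} := by
  classical
  obtain ⟨⟨h2, hlap⟩, hpos, h1, hzero, hnorm⟩ := hu
  have hFeq := Fext_eq_on hopen h2
  have hFc := Fext_cont hopen h2 h1
  have hFnorm := norm_Fext_frontier hopen h2 h1 hnorm
  have hFre := re_Fext_nonneg hopen h2 h1 hux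
  set p : ℂ → ℂ := fun w => gradC (Fext u Ω w) with hp
  have hp_diff : DifferentiableOn ℂ p Ω := by
    refine (pdiff hopen h2 hlap).congr ?_
    intro z hz
    simp only [hp]
    rw [hFeq z hz]
  have hgradc_cont : Continuous (fun L : ℂ →L[ℝ] ℝ => gradC L) := by
    unfold gradC
    exact ((Complex.continuous_ofReal.comp
        (ContinuousLinearMap.apply ℝ ℝ (1 : ℂ)).continuous)).sub
      (continuous_const.mul (Complex.continuous_ofReal.comp
        (ContinuousLinearMap.apply ℝ ℝ Complex.I).continuous))
  have hp_cont : ContinuousOn p (closure Ω) := hgradc_cont.comp_continuousOn hFc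
  set q : ℂ → ℂ := fun ζ => p (Ψ ζ) with hq
  have hΨU : Set.MapsTo Ψ {z : ℂ | 0 < z.re} Ω := hΨbij.mapsTo
  have hΨcl : Set.MapsTo Ψ {z : ℂ | 0 ≤ z.re} (closure Ω) := by
    intro z hz
    rw [← hΨsurj]
    exact Set.mem_image_of_mem _ hz
  have hq_diff : DifferentiableOn ℂ q {z : ℂ | 0 < z.re} := hp_diff.comp hΨholo hΨU
  have hq_cont : ContinuousOn q {z : ℂ | 0 ≤ z.re} := hp_cont.comp hΨcont hΨcl
  have hq_repos : ∀ ζ ∈ {z : ℂ | 0 < z.re}, 0 < (q ζ).re := by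
    intro ζ hζ
    have hz := hΨU hζ
    simp only [hq, hp]
    rw [hFeq _ hz, re_gradC]
    exact hux _ hz
  have hq_bd : ∀ ζ : ℂ, ζ.re = 0 → ‖q ζ‖ = 1 := by
    intro ζ hζ
    have hw := hΨbd ζ hζ
    simp only [hq, hp]
    rw [norm_gradC]
    exact hFnorm _ hw
  have hq_renn : ∀ ζ : ℂ, 0 ≤ ζ.re → 0 ≤ (q ζ).re := by
    intro ζ hζ
    rcases lt_or_eq_of_le hζ with h | h
    · exact (hq_repos ζ h).le
    · have := hFre _ (hΨcl (show ζ ∈ {z : ℂ | 0 ≤ z.re} from hζ))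
      simp only [hq, hp, re_gradC]
      exact this
  have hden : ∀ ζ : ℂ, 0 ≤ ζ.re → q ζ + 1 ≠ 0 := by
    intro ζ hζ h
    have hq1 : q ζ = -1 := by
      have := eq_neg_of_add_eq_zero_left h
      simpa using this
    have := hq_renn ζ hζ
    rw [hq1] at this
    simp only [Complex.neg_re, Complex.one_re] at this
    linarith
  set g : ℂ → ℂ := fun ζ => (q ζ - 1) / (q ζ + 1) with hg
  have hg_diff : DifferentiableOn ℂ g {z : ℂ | 0 < z.re} :=
    (hq_diff.sub (differentiableOn_const 1)).div (hq_diff.add (differentiableOn_const 1))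
      (fun ζ hζ => hden ζ (le_of_lt hζ))
  have hg_cont : ContinuousOn g {z : ℂ | 0 ≤ z.re} :=
    (hq_cont.sub continuousOn_const).div (hq_cont.add continuousOn_const)
      (fun ζ hζ => hden ζ hζ)
  have habs_aux : ∀ ζ : ℂ, 0 ≤ ζ.re → ‖g ζ‖ ≤ 1 := by
    intro ζ hζ
    have hdpos : 0 < ‖q ζ + 1‖ := norm_pos_iff.mpr (hden ζ hζ)
    simp only [hg]
    rw [norm_div, div_le_one hdpos]
    have hsq : ‖q ζ - 1‖ ^ 2 ≤ ‖q ζ + 1‖ ^ 2 := by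
      rw [Complex.sq_norm, Complex.sq_norm, Complex.normSq_apply, Complex.normSq_apply]
      simp only [Complex.sub_re, Complex.add_re, Complex.sub_im, Complex.add_im,
        Complex.one_re, Complex.one_im]
      nlinarith [hq_renn ζ hζ]
    exact (pow_le_pow_iff_left₀ (norm_nonneg _) (norm_nonneg _)
      (two_ne_zero)).mp hsq
  have hg_bd0 : ∀ ζ : ℂ, ζ.re = 0 → (g ζ).re = 0 := by
    intro ζ hζ
    have hns : Complex.normSq (q ζ) = 1 := by
      rw [← Complex.sq_norm, hq_bd ζ hζ, one_pow]
    simp only [hg]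
    rw [Complex.div_re]
    rw [← add_div]
    have hnum : (q ζ - 1).re * (q ζ + 1).re + (q ζ - 1).im * (q ζ + 1).im = 0 := by
      simp only [Complex.sub_re, Complex.add_re, Complex.sub_im, Complex.add_im,
        Complex.one_re, Complex.one_im]
      rw [Complex.normSq_apply] at hns
      nlinarith
    rw [hnum, zero_div]
  have hre0 : ∀ ζ : ℂ, 0 ≤ ζ.re → (g ζ).re = 0 :=
    re_eq_zero_of_PL hg_diff hg_cont habs_aux hg_bd0
  obtain ⟨w₀, hw₀⟩ := const_of_re_eq_zero hg_diff (fun ζ hζ => hre0 ζ (le_of_lt hζ))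
  have h1U : (1 : ℂ) ∈ {z : ℂ | 0 < z.re} := by simp
  have hw₀re : w₀.re = 0 := by
    rw [← hw₀ 1 (by simp)]
    exact hre0 1 (by norm_num)
  have habsw₀ : ‖w₀‖ < 1 := by
    rw [← hw₀ 1 (by simp)]
    have hdpos : 0 < ‖q 1 + 1‖ := norm_pos_iff.mpr (hden 1 (by norm_num))
    simp only [hg]
    rw [norm_div, div_lt_one hdpos]
    have hsq : ‖q 1 - 1‖ ^ 2 < ‖q 1 + 1‖ ^ 2 := by
      rw [Complex.sq_norm, Complex.sq_norm, Complex.normSq_apply, Complex.normSq_apply]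
      simp only [Complex.sub_re, Complex.add_re, Complex.sub_im, Complex.add_im,
        Complex.one_re, Complex.one_im]
      nlinarith [hq_repos 1 h1U]
    nlinarith [norm_nonneg (q 1 - 1), norm_nonneg (q 1 + 1)]
  have hw₀ne : (1 : ℂ) - w₀ ≠ 0 := by
    intro h
    have : w₀ = 1 := by
      have := sub_eq_zero.mp h
      exact this.symm
    rw [this] at habsw₀
    simp at habsw₀
  set p₀ : ℂ := (1 + w₀) / (1 - w₀) with hp₀
  have hq_const : ∀ ζ ∈ {z : ℂ | 0 < z.re}, q ζ = p₀ := by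
    intro ζ hζ
    have hgζ := hw₀ ζ hζ
    simp only [hg] at hgζ
    have hd := hden ζ (le_of_lt hζ)
    have h1' : q ζ - 1 = w₀ * (q ζ + 1) := by
      rw [div_eq_iff hd] at hgζ
      exact hgζ
    rw [hp₀, eq_div_iff hw₀ne]
    linear_combination h1'
  have habs_p₀ : ‖p₀‖ = 1 := by
    have hns : Complex.normSq (1 + w₀) = Complex.normSq (1 - w₀) := by
      simp only [Complex.normSq_apply, Complex.add_re, Complex.add_im, Complex.sub_re,
        Complex.sub_im, Complex.one_re, Complex.one_im, hw₀re]
      ring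
    rw [hp₀, norm_div, Complex.norm_def, Complex.norm_def, hns,
      div_self]
    rw [Real.sqrt_ne_zero']
    exact Complex.normSq_pos.mpr hw₀ne
  have hre_p₀ : 0 < p₀.re := by
    rw [← hq_const 1 h1U]
    exact hq_repos 1 h1U
  set L₀ : ℂ →L[ℝ] ℝ := Complex.reCLM.comp ((ContinuousLinearMap.mul ℝ ℂ) p₀) with hL₀
  have hL₀apply : ∀ z : ℂ, L₀ z = (p₀ * z).re := fun z => rfl
  have hgrad_const : ∀ z ∈ Ω, fderiv ℝ u z = L₀ := by
    intro z hz
    obtain ⟨ζ, hζ, rfl⟩ := hΨbij.surjOn hz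
    have hqζ : gradC (fderiv ℝ u (Ψ ζ)) = p₀ := by
      have h' := hq_const ζ hζ
      simp only [hq, hp] at h'
      rw [hFeq _ (hΨU hζ)] at h'
      exact h'
    apply ContinuousLinearMap.ext
    intro v
    rw [hL₀apply, ← hqζ, re_gradC_mul]
  obtain ⟨z₀, hz₀⟩ := hne
  have hφder : ∀ z ∈ Ω, HasFDerivAt (fun z => u z - (p₀ * z).re) (0 : ℂ →L[ℝ] ℝ) z := by
    intro z hz
    have hud : DifferentiableAt ℝ u z :=
      ((h2.contDiffAt (hopen.mem_nhds hz)).differentiableAt (by norm_num))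
    have h1' : HasFDerivAt u L₀ z := by
      rw [← hgrad_const z hz]
      exact hud.hasFDerivAt
    have h2' : HasFDerivAt (fun z : ℂ => (p₀ * z).re) L₀ z := L₀.hasFDerivAt
    have h := h1'.sub h2'; rw [sub_self] at h; exact h
  set k : ℝ := u z₀ - (p₀ * z₀).re with hk
  have haff : ∀ z ∈ Ω, u z = (p₀ * z).re + k := by
    intro z hz
    have := const_on_connected hopen hconn.isPreconnected hφder hz₀ z hz
    rw [hk]
    linarith [this]
  refine ⟨p₀, k, by exact habs_p₀, ?_⟩
  have hΩsub : Ω ⊆ {z : ℂ | 0 < (p₀ * z).re + k} := by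
    intro z hz
    have := hpos z hz
    rw [haff z hz] at this
    exact this
  have hkey : ∀ z ∈ closure Ω, 0 < (p₀ * z).re + k → z ∈ Ω := by
    intro z hzc hzH
    by_contra hzn
    have hfr : z ∈ frontier Ω := by
      rw [hopen.frontier_eq]
      exact ⟨hzc, hzn⟩
    have hu0 : u z = 0 := hzero z hfr
    haveI : (𝓝[Ω] z).NeBot := mem_closure_iff_nhdsWithin_neBot.mp hzc
    have ht1 : Filter.Tendsto u (𝓝[Ω] z) (𝓝 (u z)) :=
      ((h1.continuousOn z hzc).mono (subset_closure (s := Ω)))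
    have ht2 : Filter.Tendsto u (𝓝[Ω] z) (𝓝 ((p₀ * z).re + k)) := by
      have hcont : Continuous (fun y : ℂ => (p₀ * y).re + k) := by
        exact ((Complex.continuous_re.comp (continuous_const.mul continuous_id)).add
          continuous_const)
      refine (( hcont.tendsto z).mono_left nhdsWithin_le_nhds).congr' ?_
      filter_upwards [self_mem_nhdsWithin] with y hy using (haff y hy).symm
    have heq := tendsto_nhds_unique ht1 ht2
    rw [hu0] at heq
    rw [← heq] at hzH
    exact lt_irrefl 0 hzH
  have hHconv : Convex ℝ {z : ℂ | 0 < (p₀ * z).re + k} := by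
    have hset : {z : ℂ | 0 < (p₀ * z).re + k} = {z : ℂ | -k < L₀ z} := by
      ext z
      simp only [Set.mem_setOf_eq, hL₀apply]
      constructor <;> intro <;> linarith
    rw [hset]
    exact convex_halfSpace_gt (L₀.toLinearMap.isLinear) (-k)
  have hHsub : {z : ℂ | 0 < (p₀ * z).re + k} ⊆ Ω := by
    have hsub2 : {z : ℂ | 0 < (p₀ * z).re + k} ⊆ Ω ∪ (closure Ω)ᶜ := by
      intro z hz
      by_cases hc : z ∈ closure Ω
      · exact Or.inl (hkey z hc hz)
      · exact Or.inr hc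
    intro z hz
    by_cases hc : z ∈ closure Ω
    · exact hkey z hc hz
    · exfalso
      obtain ⟨y, _, hyΩ, hyc⟩ :=
        hHconv.isPreconnected Ω (closure Ω)ᶜ hopen (isOpen_compl_iff.mpr isClosed_closure)
          hsub2 ⟨z₀, hΩsub hz₀, hz₀⟩ ⟨z, hz, hc⟩
      exact hyc (subset_closure hyΩ)
  exact Set.Subset.antisymm hΩsub hHsub
end

section
/- The map F(z) = z + sinh z is a conformal diffeomorphism from the strip S onto the domain Ω: F restricted to S is injective, its image F(S) equals Ω, F is holomorphic, and its derivative F'(z) = 1 + cosh z does not vanish at any point of S. -/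
open Real

lemma csinh_re (z : ℂ) : (Complex.sinh z).re = Real.sinh z.re * Real.cos z.im := by
  conv_lhs => rw [← Complex.re_add_im z]
  rw [Complex.sinh_add, Complex.sinh_mul_I, Complex.cosh_mul_I]
  simp [Complex.mul_re, Complex.sinh_ofReal_re, Complex.sinh_ofReal_im,
    Complex.cosh_ofReal_re, Complex.cosh_ofReal_im, Complex.cos_ofReal_re,
    Complex.cos_ofReal_im, Complex.sin_ofReal_re, Complex.sin_ofReal_im]

lemma csinh_im (z : ℂ) : (Complex.sinh z).im = Real.cosh z.re * Real.sin z.im := by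
  conv_lhs => rw [← Complex.re_add_im z]
  rw [Complex.sinh_add, Complex.sinh_mul_I, Complex.cosh_mul_I]
  simp [Complex.mul_im, Complex.mul_re, Complex.sinh_ofReal_re, Complex.sinh_ofReal_im,
    Complex.cosh_ofReal_re, Complex.cosh_ofReal_im, Complex.cos_ofReal_re,
    Complex.cos_ofReal_im, Complex.sin_ofReal_re, Complex.sin_ofReal_im]

lemma ccosh_re (z : ℂ) : (Complex.cosh z).re = Real.cosh z.re * Real.cos z.im := by
  conv_lhs => rw [← Complex.re_add_im z]
  rw [Complex.cosh_add, Complex.sinh_mul_I, Complex.cosh_mul_I]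
  simp [Complex.mul_re, Complex.sinh_ofReal_re, Complex.sinh_ofReal_im,
    Complex.cosh_ofReal_re, Complex.cosh_ofReal_im, Complex.cos_ofReal_re,
    Complex.cos_ofReal_im, Complex.sin_ofReal_re, Complex.sin_ofReal_im]

lemma ccosh_im (z : ℂ) : (Complex.cosh z).im = Real.sinh z.re * Real.sin z.im := by
  conv_lhs => rw [← Complex.re_add_im z]
  rw [Complex.cosh_add, Complex.sinh_mul_I, Complex.cosh_mul_I]
  simp [Complex.mul_im, Complex.mul_re, Complex.sinh_ofReal_re, Complex.sinh_ofReal_im,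
    Complex.cosh_ofReal_re, Complex.cosh_ofReal_im, Complex.cos_ofReal_re,
    Complex.cos_ofReal_im, Complex.sin_ofReal_re, Complex.sin_ofReal_im]

lemma hFderiv (z : ℂ) : HasDerivAt (fun z => z + Complex.sinh z) (1 + Complex.cosh z) z :=
  (hasDerivAt_id z).add (Complex.hasDerivAt_sinh z)

lemma deriv_re_pos {z : ℂ} (hz : |z.im| < π / 2) : 0 < (1 + Complex.cosh z).re := by
  have h := abs_lt.1 hz
  have hc : 0 < Real.cos z.im := Real.cos_pos_of_mem_Ioo ⟨h.1, h.2⟩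
  have : (1 + Complex.cosh z).re = 1 + Real.cosh z.re * Real.cos z.im := by
    simp [Complex.add_re, ccosh_re]
  rw [this]
  positivity

lemma deriv_ne_zero {z : ℂ} (hz : |z.im| < π / 2) : 1 + Complex.cosh z ≠ 0 := by
  intro h
  have := deriv_re_pos hz
  rw [h] at this
  simp at this

lemma abs_re_le (z : ℂ) (hz : |z.im| ≤ π / 2) :
    |z.re| ≤ |(z + Complex.sinh z).re| := by
  have h := abs_le.1 hz
  have hc : 0 ≤ Real.cos z.im := Real.cos_nonneg_of_mem_Icc ⟨h.1, h.2⟩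
  have hre : (z + Complex.sinh z).re = z.re + Real.sinh z.re * Real.cos z.im := by
    simp [Complex.add_re, csinh_re]
  rw [hre]
  rcases le_or_gt 0 z.re with hx | hx
  · have hs : 0 ≤ Real.sinh z.re * Real.cos z.im :=
      mul_nonneg (Real.sinh_nonneg_iff.2 hx) hc
    rw [abs_of_nonneg hx, abs_of_nonneg (by linarith)]
    linarith
  · have hs : Real.sinh z.re * Real.cos z.im ≤ 0 :=
      mul_nonpos_of_nonpos_of_nonneg (Real.sinh_nonpos_iff.2 hx.le) hc
    rw [abs_of_neg hx, abs_of_nonpos (by linarith)]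
    linarith

lemma forward_incl {z : ℂ} (hz : |z.im| < π / 2) :
    |(z + Complex.sinh z).im| < π / 2 + Real.cosh ((z + Complex.sinh z).re) := by
  have him : (z + Complex.sinh z).im = z.im + Real.cosh z.re * Real.sin z.im := by
    simp [Complex.add_im, csinh_im]
  have hcosh : Real.cosh z.re ≤ Real.cosh ((z + Complex.sinh z).re) :=
    Real.cosh_le_cosh.2 (abs_re_le z hz.le)
  have h1 : |(z + Complex.sinh z).im| ≤ |z.im| + Real.cosh z.re * |Real.sin z.im| := by
    rw [him]
    calc |z.im + Real.cosh z.re * Real.sin z.im| ≤ |z.im| + |Real.cosh z.re * Real.sin z.im| :=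
          abs_add_le _ _
      _ = |z.im| + Real.cosh z.re * |Real.sin z.im| := by
          rw [abs_mul, abs_of_pos (Real.cosh_pos _)]
  have h2 : Real.cosh z.re * |Real.sin z.im| ≤ Real.cosh z.re :=
    mul_le_of_le_one_right (Real.cosh_pos _).le (Real.abs_sin_le_one _)
  linarith

lemma boundary_excl {z : ℂ} (hz : |z.im| = π / 2) :
    |(z + Complex.sinh z).im| = π / 2 + Real.cosh ((z + Complex.sinh z).re) := by
  have hre : (z + Complex.sinh z).re = z.re := by
    have : Real.cos z.im = 0 := by
      rcases abs_eq (by positivity : (0:ℝ) ≤ π/2) |>.1 hz with h | h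
      · rw [h, Real.cos_pi_div_two]
      · rw [h, Real.cos_neg, Real.cos_pi_div_two]
    simp [Complex.add_re, csinh_re, this]
  rw [hre]
  have him : (z + Complex.sinh z).im = z.im + Real.cosh z.re * Real.sin z.im := by
    simp [Complex.add_im, csinh_im]
  rcases abs_eq (by positivity : (0:ℝ) ≤ π/2) |>.1 hz with h | h
  · rw [him, h, Real.sin_pi_div_two, mul_one, abs_of_pos (by positivity)]
  · rw [him, h]
    rw [show -(π/2) + Real.cosh z.re * Real.sin (-(π/2)) = -(π/2 + Real.cosh z.re) by
      rw [Real.sin_neg, Real.sin_pi_div_two]; ring]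
    rw [abs_neg, abs_of_pos (by positivity)]

lemma F_injOn : Set.InjOn (fun z => z + Complex.sinh z) {z : ℂ | |z.im| < π / 2} := by
  intro z₁ h₁ z₂ h₂ heq
  by_contra hne
  set d : ℂ := z₂ - z₁ with hd
  have hdne : d ≠ 0 := sub_ne_zero.2 (Ne.symm hne)
  set g : ℝ → ℂ := fun t => z₁ + (t : ℂ) * d with hg
  have hgS : ∀ t ∈ Set.Icc (0:ℝ) 1, |(g t).im| < π / 2 := by
    intro t ht
    have : (g t).im = (1 - t) * z₁.im + t * z₂.im := by
      simp [hg, hd, Complex.add_im, Complex.mul_im, Complex.sub_im]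
      ring
    rw [this]
    calc |(1 - t) * z₁.im + t * z₂.im| ≤ |(1 - t) * z₁.im| + |t * z₂.im| := abs_add_le _ _
      _ = (1 - t) * |z₁.im| + t * |z₂.im| := by
          rw [abs_mul, abs_mul, abs_of_nonneg (by linarith [ht.2] : (0:ℝ) ≤ 1 - t),
            abs_of_nonneg ht.1]
      _ < (1 - t) * (π/2) + t * (π/2) := by
          rcases eq_or_lt_of_le ht.2 with h1' | h1'
          · subst h1'
            simpa using h₂
          · have ha := mul_lt_mul_of_pos_left h₁ (by linarith : (0:ℝ) < 1 - t)
            have hb := mul_le_mul_of_nonneg_left h₂.le ht.1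
            linarith
      _ = π/2 := by ring
  set ψ : ℝ → ℝ := fun t => ((g t + Complex.sinh (g t)) * (starRingEnd ℂ) d).re with hψ
  have hψderiv : ∀ t : ℝ, HasDerivAt ψ
      (((1 + Complex.cosh (g t)) * d * (starRingEnd ℂ) d).re) t := by
    intro t
    have hgd : HasDerivAt g d t := by
      have h1 : HasDerivAt (fun t : ℝ => (t : ℂ)) 1 t := Complex.ofRealCLM.hasDerivAt
      have := (h1.mul_const d).const_add z₁
      rw [one_mul] at this
      exact this
    have hFd : HasDerivAt (fun t => g t + Complex.sinh (g t))
        ((1 + Complex.cosh (g t)) * d) t := by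
      have := (hFderiv (g t)).scomp t hgd
      rw [smul_eq_mul, mul_comm] at this
      exact this
    have := ((hFd.mul_const ((starRingEnd ℂ) d)))
    exact (Complex.reCLM.hasFDerivAt.comp_hasDerivAt t this)
  have hpos : ∀ t ∈ Set.Icc (0:ℝ) 1,
      0 < ((1 + Complex.cosh (g t)) * d * (starRingEnd ℂ) d).re := by
    intro t ht
    rw [mul_assoc, Complex.mul_conj]
    rw [Complex.mul_re]
    simp only [Complex.ofReal_re, Complex.ofReal_im, mul_zero, sub_zero]
    exact mul_pos (deriv_re_pos (hgS t ht)) (Complex.normSq_pos.2 hdne)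
  have hmono : StrictMonoOn ψ (Set.Icc (0:ℝ) 1) := by
    apply strictMonoOn_of_deriv_pos (convex_Icc 0 1)
    · exact Continuous.continuousOn (by fun_prop)
    · intro t ht
      rw [interior_Icc] at ht
      rw [(hψderiv t).deriv]
      exact hpos t ⟨ht.1.le, ht.2.le⟩
  have h01 : ψ 0 < ψ 1 := hmono (by norm_num) (by norm_num) one_pos
  have hg0 : g 0 = z₁ := by simp [hg]
  have hg1 : g 1 = z₂ := by simp [hg, hd]
  rw [hψ] at h01
  simp only [hg0, hg1] at h01
  have heq' : z₁ + Complex.sinh z₁ = z₂ + Complex.sinh z₂ := heq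
  rw [heq'] at h01
  exact lt_irrefl _ h01

lemma omega_pathConnected : IsPathConnected {w : ℂ | |w.im| < π / 2 + Real.cosh w.re} := by
  have h0 : (0:ℂ) ∈ {w : ℂ | |w.im| < π / 2 + Real.cosh w.re} := by
    simp only [Set.mem_setOf_eq, Complex.zero_im, Complex.zero_re, abs_zero]
    positivity
  refine ⟨0, h0, ?_⟩
  intro w hw
  have hseg1 : JoinedIn {w : ℂ | |w.im| < π / 2 + Real.cosh w.re} (0:ℂ) (w.re : ℂ) := by
    apply JoinedIn.of_segment_subset
    intro u hu
    obtain ⟨a, b, ha, hb, hab, rfl⟩ := hu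
    have hre : (a • (0:ℂ) + b • (w.re:ℂ)).im = 0 := by
      simp [Complex.add_im, Complex.smul_im]
    simp only [Set.mem_setOf_eq, hre, abs_zero]
    positivity
  have hseg2 : JoinedIn {w : ℂ | |w.im| < π / 2 + Real.cosh w.re} (w.re : ℂ) w := by
    apply JoinedIn.of_segment_subset
    intro u hu
    obtain ⟨a, b, ha, hb, hab, rfl⟩ := hu
    have hure : (a • (w.re:ℂ) + b • w).re = w.re := by
      simp [Complex.add_re, Complex.smul_re]
      linear_combination w.re * hab
    have huim : (a • (w.re:ℂ) + b • w).im = b * w.im := by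
      simp [Complex.add_im, Complex.smul_im]
    simp only [Set.mem_setOf_eq, hure, huim]
    have : |b * w.im| ≤ |w.im| := by
      rw [abs_mul, abs_of_nonneg hb]
      nlinarith [mul_nonneg ha (abs_nonneg w.im), abs_nonneg w.im]
    exact lt_of_le_of_lt this hw
  exact hseg1.trans hseg2

lemma closure_incl {w : ℂ} (hw : |w.im| < π / 2 + Real.cosh w.re)
    (hcl : w ∈ closure ((fun z => z + Complex.sinh z) '' {z : ℂ | |z.im| < π / 2})) :
    w ∈ (fun z => z + Complex.sinh z) '' {z : ℂ | |z.im| < π / 2} := by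
  set F : ℂ → ℂ := fun z => z + Complex.sinh z with hF
  set S : Set ℂ := {z : ℂ | |z.im| < π / 2} with hS
  set r : ℝ := |w.re| + 1 with hr
  set K : Set ℂ := {z : ℂ | |z.re| ≤ r ∧ |z.im| ≤ π / 2} with hK
  have hKcompact : IsCompact K := by
    apply Metric.isCompact_of_isClosed_isBounded
    · exact IsClosed.inter
        (isClosed_le (Complex.continuous_re.abs) continuous_const)
        (isClosed_le (Complex.continuous_im.abs) continuous_const)
    · apply (Metric.isBounded_closedBall (x := (0:ℂ)) (r := r + π/2)).subset
      intro z hz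
      rw [Metric.mem_closedBall, dist_zero_right]
      calc ‖z‖ ≤ |z.re| + |z.im| := Complex.norm_le_abs_re_add_abs_im z
        _ ≤ r + π/2 := add_le_add hz.1 hz.2
  have hcl2 : w ∈ closure (F '' (S ∩ K)) := by
    rw [Metric.mem_closure_iff]
    intro ε hε
    rw [Metric.mem_closure_iff] at hcl
    obtain ⟨b, hb, hdist⟩ := hcl (min ε 1) (lt_min hε one_pos)
    obtain ⟨z, hzS, rfl⟩ := hb
    refine ⟨F z, ⟨z, ⟨hzS, ?_, hzS.le⟩, rfl⟩, lt_of_lt_of_le hdist (min_le_left _ _)⟩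
    have h1 : |(F z).re - w.re| ≤ dist w (F z) := by
      rw [dist_comm, Complex.dist_eq]
      calc |(F z).re - w.re| = |(F z - w).re| := by rw [Complex.sub_re]
        _ ≤ ‖F z - w‖ := Complex.abs_re_le_norm _
    have h2 : |(F z).re| ≤ |w.re| + 1 := by
      have := abs_sub_abs_le_abs_sub (F z).re w.re
      have hd1 : dist w (F z) < 1 := lt_of_lt_of_le hdist (min_le_right _ _)
      linarith
    calc |z.re| ≤ |(F z).re| := abs_re_le z hzS.le
      _ ≤ r := h2
  have hFcont : Continuous F := continuous_id.add Complex.continuous_sinh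
  have himgcompact : IsCompact (F '' K) := hKcompact.image hFcont
  have hsub : closure (F '' (S ∩ K)) ⊆ F '' K :=
    closure_minimal (Set.image_mono Set.inter_subset_right) himgcompact.isClosed
  obtain ⟨z, hzK, rfl⟩ := hsub hcl2
  rcases lt_or_eq_of_le hzK.2 with h | h
  · exact ⟨z, h, rfl⟩
  · exact absurd hw (by rw [boundary_excl h]; exact lt_irrefl _)

lemma image_isOpen : IsOpen ((fun z => z + Complex.sinh z) '' {z : ℂ | |z.im| < π / 2}) := by
  set F : ℂ → ℂ := fun z => z + Complex.sinh z with hF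
  set S : Set ℂ := {z : ℂ | |z.im| < π / 2} with hS
  have hSopen : IsOpen S := isOpen_lt (Complex.continuous_im.abs) continuous_const
  rw [isOpen_iff_mem_nhds]
  rintro w ⟨z, hz, rfl⟩
  have hc : ContDiffAt ℂ 1 F z :=
    (contDiff_id.add Complex.contDiff_sinh).contDiffAt
  have hs : HasStrictDerivAt F (1 + Complex.cosh z) z := by
    have := hc.hasStrictDerivAt one_ne_zero
    rwa [(hFderiv z).deriv] at this
  have hmap : Filter.map F (nhds z) = nhds (F z) := hs.map_nhds_eq (deriv_ne_zero hz)
  rw [← hmap, Filter.mem_map]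
  exact Filter.mem_of_superset (hSopen.mem_nhds hz) (Set.subset_preimage_image F S)

lemma omega_subset :
    {w : ℂ | |w.im| < π / 2 + Real.cosh w.re} ⊆
      (fun z => z + Complex.sinh z) '' {z : ℂ | |z.im| < π / 2} := by
  set F : ℂ → ℂ := fun z => z + Complex.sinh z with hF
  set S : Set ℂ := {z : ℂ | |z.im| < π / 2} with hS
  set Ω : Set ℂ := {w : ℂ | |w.im| < π / 2 + Real.cosh w.re} with hΩ
  have hpc : IsPreconnected Ω := omega_pathConnected.isConnected.isPreconnected
  set U : Set ℂ := F '' S with hU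
  set V : Set ℂ := (closure (F '' S))ᶜ with hV
  have hcover : Ω ⊆ U ∪ V := by
    intro w hw
    by_cases h : w ∈ closure (F '' S)
    · exact Or.inl (closure_incl hw h)
    · exact Or.inr h
  have hUne : (Ω ∩ U).Nonempty := by
    refine ⟨0, ?_, 0, ?_, by simp [hF]⟩
    · simp only [hΩ, Set.mem_setOf_eq, Complex.zero_im, Complex.zero_re, abs_zero]
      positivity
    · simp only [hS, Set.mem_setOf_eq, Complex.zero_im, abs_zero]
      positivity
  have hVempty : Ω ∩ V = ∅ := by
    by_contra h
    obtain ⟨x, hx⟩ := hpc U V image_isOpen isClosed_closure.isOpen_compl hcover hUne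
      (Set.nonempty_iff_ne_empty.2 h)
    exact hx.2.2 (subset_closure hx.2.1)
  intro w hw
  rcases hcover hw with h | h
  · exact h
  · exact absurd (Set.mem_inter hw h) (by rw [hVempty]; exact id)

/-- `F(z) = z + sinh z` is a conformal diffeomorphism from the strip
`S = {|Im z| < π/2}` onto `Ω = {|Im w| < π/2 + cosh (Re w)}`: it is injective
on `S`, maps `S` onto `Ω`, is holomorphic, and its derivative `1 + cosh z`
does not vanish on `S`. -/
theorem conformal_diffeo_strip :
    let F : ℂ → ℂ := fun z => z + Complex.sinh z
    let S : Set ℂ := {z : ℂ | |z.im| < π / 2}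
    let Ω : Set ℂ := {w : ℂ | |w.im| < π / 2 + Real.cosh w.re}
    Set.InjOn F S ∧
    F '' S = Ω ∧
    (∀ z : ℂ, HasDerivAt F (1 + Complex.cosh z) z) ∧
    (∀ z ∈ S, 1 + Complex.cosh z ≠ 0) := by
  intro F S Ω
  refine ⟨F_injOn, ?_, hFderiv, fun z hz => deriv_ne_zero hz⟩
  apply Set.Subset.antisymm
  · rintro w ⟨z, hz, rfl⟩
    exact forward_incl hz
  · exact omega_subset
end

section
/- For all z, z′ ∈ ℂ, the real inner product of z − z′ with F(z) − F(z′) satisfies ⟨z − z′, F(z) − F(z′)⟩ = |z − z′|² · (1 + ∫₀¹ Re cosh(t·z + (1−t)·z′) dt), where ⟨w₁, w₂⟩ := Re(conj(w₁)·w₂). -/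
open Real

lemma sinh_sub_eq (z z' : ℂ) :
    Complex.sinh z - Complex.sinh z' =
      (z - z') * ∫ t in (0:ℝ)..1, Complex.cosh (t * z + (1 - t) * z') := by
  have hderiv : ∀ t ∈ Set.uIcc (0:ℝ) 1,
      HasDerivAt (fun s : ℝ => Complex.sinh ((s:ℂ) * z + (1 - s) * z'))
        ((z - z') * Complex.cosh ((t:ℂ) * z + (1 - t) * z')) t := by
    intro t _
    have h1 : HasDerivAt (fun s : ℝ => (s:ℂ) * z + (1 - s) * z') (z - z') t := by
      have : HasDerivAt (fun s : ℝ => (s:ℂ)) 1 t := Complex.ofRealCLM.hasDerivAt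
      have := ((this.mul_const z).add (((hasDerivAt_const t (1:ℂ)).sub this).mul_const z'))
      exact this.congr_deriv (by ring)
    have h2 := (Complex.hasDerivAt_sinh ((t:ℂ) * z + (1 - t) * z')).comp t h1
    exact h2.congr_deriv (mul_comm _ _)
  have hint : IntervalIntegrable
      (fun t : ℝ => (z - z') * Complex.cosh ((t:ℂ) * z + (1 - t) * z'))
      MeasureTheory.volume 0 1 := by
    apply Continuous.intervalIntegrable
    continuity
  have := intervalIntegral.integral_eq_sub_of_hasDerivAt hderiv hint
  rw [intervalIntegral.integral_const_mul] at this
  simpa using this.symm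

/-- For `F(z) = z + sinh z` and the real inner product
`⟨w₁, w₂⟩ = Re (conj w₁ * w₂)` on `ℂ ≅ ℝ²`, we have
`⟨z - z', F z - F z'⟩ = |z - z'|² (1 + ∫₀¹ Re cosh (t z + (1-t) z') dt)`. -/
theorem inner_sub_F_sub (z z' : ℂ) :
    let F : ℂ → ℂ := fun w => w + Complex.sinh w
    ((starRingEnd ℂ) (z - z') * (F z - F z')).re =
      ‖z - z'‖ ^ 2 *
        (1 + ∫ t in (0:ℝ)..1, (Complex.cosh (t * z + (1 - t) * z')).re) := by
  intro F
  have hre : (∫ t in (0:ℝ)..1, Complex.cosh (t * z + (1 - t) * z')).re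
      = ∫ t in (0:ℝ)..1, (Complex.cosh (t * z + (1 - t) * z')).re := by
    have hi : IntervalIntegrable (fun t : ℝ => Complex.cosh ((t:ℂ) * z + (1 - t) * z'))
        MeasureTheory.volume 0 1 := by
      apply Continuous.intervalIntegrable; continuity
    simpa using (Complex.reCLM.intervalIntegral_comp_comm hi).symm
  have hF : F z - F z' = (z - z') * (1 + ∫ t in (0:ℝ)..1, Complex.cosh (t * z + (1 - t) * z')) := by
    simp only [F]
    rw [mul_add, mul_one, ← sinh_sub_eq]
    ring
  rw [hF, ← mul_assoc, ← Complex.normSq_eq_conj_mul_self, ← Complex.sq_norm, Complex.re_ofReal_mul, Complex.add_re, Complex.one_re, hre]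
end

section
/- The map F(z) = z + sinh z is injective on the closed strip {z ∈ ℂ : |Im z| ≤ π/2}: if z and z′ lie in this closed strip and F(z) = F(z′), then z = z′. -/
open Real

private lemma cosh_re' (w : ℂ) :
    (Complex.cosh w).re = Real.cosh w.re * Real.cos w.im := by
  rw [show Complex.cosh w = (Complex.exp w + Complex.exp (-w)) / 2 from rfl]
  simp [Complex.div_re, Complex.add_re, Complex.exp_re, Complex.exp_im, Complex.neg_re,
    Complex.neg_im, Real.cos_neg, Real.sin_neg, Real.cosh_eq]
  ring

/-- `F(z) = z + sinh z` is injective on the closed strip `{|Im z| ≤ π/2}`. -/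
theorem F_injOn_closed_strip (z z' : ℂ)
    (hz : |z.im| ≤ π / 2) (hz' : |z'.im| ≤ π / 2)
    (h : z + Complex.sinh z = z' + Complex.sinh z') : z = z' := by
  by_contra hne
  set u : ℂ := z' - z with hu
  have hu0 : u ≠ 0 := sub_ne_zero.mpr (Ne.symm hne)
  set φ : ℝ → ℂ := fun t => z + t • u with hφ
  set g : ℝ → ℝ := fun t => ((starRingEnd ℂ) u * (φ t + Complex.sinh (φ t))).re with hg
  -- derivative of φ
  have hφd : ∀ t : ℝ, HasDerivAt φ u t := fun t => by
    simpa [hφ] using ((hasDerivAt_id t).smul_const u).const_add z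
  have hgd : ∀ t : ℝ, HasDerivAt g
      (((starRingEnd ℂ) u * (u + u • Complex.cosh (φ t))).re) t := by
    intro t
    have h1 : HasDerivAt (fun t => Complex.sinh (φ t)) (u • Complex.cosh (φ t)) t :=
      (Complex.hasDerivAt_sinh (φ t)).scomp t (hφd t)
    have h2 : HasDerivAt (fun t => φ t + Complex.sinh (φ t)) (u + u • Complex.cosh (φ t)) t :=
      (hφd t).add h1
    have h3 := h2.const_mul ((starRingEnd ℂ) u)
    exact (Complex.reCLM.hasFDerivAt.comp_hasDerivAt t h3)
  -- imaginary part stays in strip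
  have him : ∀ t ∈ Set.Icc (0:ℝ) 1, |(φ t).im| ≤ π / 2 := by
    intro t ht
    have : (φ t).im = (1 - t) * z.im + t * z'.im := by
      simp [hφ, hu, Complex.add_im, Complex.smul_im, Complex.sub_im]
      ring
    rw [this]
    calc |(1 - t) * z.im + t * z'.im| ≤ |(1 - t) * z.im| + |t * z'.im| := abs_add_le _ _
      _ = (1 - t) * |z.im| + t * |z'.im| := by
          rw [abs_mul, abs_mul, abs_of_nonneg (by linarith [ht.2]),
            abs_of_nonneg ht.1]
      _ ≤ (1 - t) * (π / 2) + t * (π / 2) := by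
          have h1 : (0:ℝ) ≤ 1 - t := by linarith [ht.2]
          have h2 : (0:ℝ) ≤ t := ht.1
          nlinarith [abs_nonneg z.im, abs_nonneg z'.im]
      _ = π / 2 := by ring
  -- derivative positive on strip
  have hpos : ∀ t ∈ Set.Icc (0:ℝ) 1,
      0 < ((starRingEnd ℂ) u * (u + u • Complex.cosh (φ t))).re := by
    intro t ht
    have hre : 0 ≤ (Complex.cosh (φ t)).re := by
      rw [cosh_re']
      have habs := him t ht
      have hc : 0 ≤ Real.cos (φ t).im :=
        Real.cos_nonneg_of_mem_Icc ⟨by cases abs_le.mp habs; linarith, (abs_le.mp habs).2⟩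
      positivity
    have : (starRingEnd ℂ) u * (u + u • Complex.cosh (φ t)) =
        (Complex.normSq u : ℂ) * (1 + Complex.cosh (φ t)) := by
      rw [smul_eq_mul, Complex.normSq_eq_conj_mul_self]
      ring
    rw [this]
    rw [Complex.re_ofReal_mul]
    have hn : 0 < Complex.normSq u := Complex.normSq_pos.mpr hu0
    have : (1 + Complex.cosh (φ t)).re = 1 + (Complex.cosh (φ t)).re := by simp
    rw [this]
    nlinarith
  -- g is strictly monotone on [0,1]
  have hmono : StrictMonoOn g (Set.Icc (0:ℝ) 1) := by
    apply strictMonoOn_of_deriv_pos (convex_Icc 0 1)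
    · exact fun t _ => (hgd t).continuousAt.continuousWithinAt
    · intro t ht
      rw [interior_Icc] at ht
      rw [(hgd t).deriv]
      exact hpos t ⟨le_of_lt ht.1, le_of_lt ht.2⟩
  have h01 : g 0 < g 1 := hmono (Set.left_mem_Icc.mpr zero_le_one)
    (Set.right_mem_Icc.mpr zero_le_one) zero_lt_one
  have he : g 0 = g 1 := by
    have h0 : φ 0 = z := by simp [hφ]
    have h1 : φ 1 = z' := by simp [hφ, hu]
    simp only [hg, h0, h1, h]
  linarith
end

section
/- Let n ≥ 1 be an integer and α := exp(2πi/n). For every z ∈ ℂ with zⁿ ≠ 1, one has (1 + zⁿ)/(1 − zⁿ) = −(1/n) · Σ_{k=1}^{n} (z + α^k)/(z − α^k). -/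
open Real

open Polynomial in
/-- Logarithmic-derivative identity: the sum over all `n`-th roots of unity of
`1/(z - ζ)` equals `n z^(n-1) / (z^n - 1)`. -/
lemma sum_one_div_sub_nthRoots (n : ℕ) (hn : 1 ≤ n) (z : ℂ) (hz : z ^ n ≠ 1) :
    ∑ ζ ∈ nthRootsFinset n (1 : ℂ), (1 : ℂ) / (z - ζ) =
      n * z ^ (n - 1) / (z ^ n - 1) := by
  classical
  have hpos : 0 < n := hn
  have hα : IsPrimitiveRoot (Complex.exp (2 * π * Complex.I / n)) n :=
    Complex.isPrimitiveRoot_exp n hpos.ne'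
  have hprod : (X : ℂ[X]) ^ n - 1 = ∏ ζ ∈ nthRootsFinset n (1 : ℂ), (X - C ζ) :=
    X_pow_sub_one_eq_prod hpos hα
  have hne : ∀ ζ ∈ nthRootsFinset n (1 : ℂ), z - ζ ≠ 0 := by
    intro ζ hζ
    have hζn : ζ ^ n = 1 := (mem_nthRootsFinset hpos (1 : ℂ)).mp hζ
    intro h
    apply hz
    rw [sub_eq_zero] at h
    rw [h, hζn]
  -- evaluate the product identity at z
  have hprodz : z ^ n - 1 = ∏ ζ ∈ nthRootsFinset n (1 : ℂ), (z - ζ) := by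
    have := congrArg (Polynomial.eval z) hprod
    simpa [Polynomial.eval_prod] using this
  -- derivative identity
  have hder : C (n : ℂ) * X ^ (n - 1) =
      ∑ ζ ∈ nthRootsFinset n (1 : ℂ), ∏ ξ ∈ (nthRootsFinset n (1 : ℂ)).erase ζ, (X - C ξ) := by
    have := congrArg derivative hprod
    rw [derivative_sub, derivative_one, derivative_X_pow, sub_zero] at this
    rw [this]
    rw [Finset.prod_eq_multiset_prod]
    rw [derivative_prod]
    rw [Finset.sum_eq_multiset_sum]
    congr 1
    refine Multiset.map_congr rfl fun ζ hζ => ?_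
    rw [derivative_sub, derivative_X, derivative_C, sub_zero, mul_one,
      Finset.prod_eq_multiset_prod, Finset.erase_val]
  have hderz : (n : ℂ) * z ^ (n - 1) =
      ∑ ζ ∈ nthRootsFinset n (1 : ℂ), ∏ ξ ∈ (nthRootsFinset n (1 : ℂ)).erase ζ, (z - ξ) := by
    have := congrArg (Polynomial.eval z) hder
    simpa [Polynomial.eval_finset_sum, Polynomial.eval_prod] using this
  have hzn : z ^ n - 1 ≠ 0 := sub_ne_zero.mpr hz
  rw [eq_div_iff hzn, Finset.sum_mul]
  rw [hderz]
  refine Finset.sum_congr rfl fun ζ hζ => ?_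
  rw [hprodz, ← Finset.mul_prod_erase _ _ hζ]
  field_simp [hne ζ hζ]

open Polynomial in
/-- For `n ≥ 1`, `α = exp (2πi/n)` and `zⁿ ≠ 1`,
`(1+zⁿ)/(1-zⁿ) = -(1/n) Σ_{k=1}^{n} (z + αᵏ)/(z - αᵏ)`. -/
theorem poisson_sum_formula (n : ℕ) (hn : 1 ≤ n) (z : ℂ) (hz : z ^ n ≠ 1) :
    (1 + z ^ n) / (1 - z ^ n) =
      -(1 / (n : ℂ)) * ∑ k ∈ Finset.Icc 1 n,
        (z + Complex.exp (2 * π * Complex.I / n) ^ k) /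
          (z - Complex.exp (2 * π * Complex.I / n) ^ k) := by
  classical
  have hpos : 0 < n := hn
  set α : ℂ := Complex.exp (2 * π * Complex.I / n) with hαdef
  have hα : IsPrimitiveRoot α n := Complex.isPrimitiveRoot_exp n hpos.ne'
  haveI : NeZero n := ⟨hpos.ne'⟩
  -- reindex: `k ↦ α ^ k` is a bijection from `Icc 1 n` to the roots of unity
  have hreindex : ∀ f : ℂ → ℂ,
      ∑ k ∈ Finset.Icc 1 n, f (α ^ k) = ∑ ζ ∈ nthRootsFinset n (1 : ℂ), f ζ := by
    intro f
    refine Finset.sum_nbij (fun k => α ^ k) ?_ ?_ ?_ ?_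
    · intro k hk
      rw [mem_nthRootsFinset hpos (1 : ℂ), ← pow_mul, mul_comm, pow_mul, hα.pow_eq_one, one_pow]
    · intro i hi j hj hij
      have hij' : α ^ i = α ^ j := hij
      simp only [Finset.coe_Icc, Set.mem_Icc] at hi hj
      by_cases hin : i = n
      · by_cases hjn : j = n
        · rw [hin, hjn]
        · exfalso
          have h1 : α ^ j = 1 := by rw [← hij', hin, hα.pow_eq_one]
          have := Nat.le_of_dvd (by omega) (hα.dvd_of_pow_eq_one j h1)
          omega
      · by_cases hjn : j = n
        · exfalso
          have h1 : α ^ i = 1 := by rw [hij', hjn, hα.pow_eq_one]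
          have := Nat.le_of_dvd (by omega) (hα.dvd_of_pow_eq_one i h1)
          omega
        · exact hα.pow_inj (lt_of_le_of_ne hi.2 hin) (lt_of_le_of_ne hj.2 hjn) hij'
    · intro ζ hζ
      have hζn : ζ ^ n = 1 := (mem_nthRootsFinset hpos (1 : ℂ)).mp hζ
      obtain ⟨i, hi, rfl⟩ := hα.eq_pow_of_pow_eq_one hζn
      by_cases hi0 : i = 0
      · refine ⟨n, ?_, ?_⟩
        · simp [Finset.mem_Icc, hn]
        · simp [hi0, hα.pow_eq_one]
      · exact ⟨i, by simp [Finset.mem_Icc]; omega, rfl⟩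
    · intro k hk
      rfl
  have hz' : z ^ n - 1 ≠ 0 := sub_ne_zero.mpr hz
  have hne : ∀ ζ ∈ nthRootsFinset n (1 : ℂ), z - ζ ≠ 0 := by
    intro ζ hζ
    have hζn : ζ ^ n = 1 := (mem_nthRootsFinset hpos (1 : ℂ)).mp hζ
    intro h
    apply hz
    rw [sub_eq_zero] at h
    rw [h, hζn]
  rw [hreindex (fun w => (z + w) / (z - w))]
  have hsplit : ∀ ζ ∈ nthRootsFinset n (1 : ℂ),
      (z + ζ) / (z - ζ) = 2 * z * (1 / (z - ζ)) - 1 := by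
    intro ζ hζ
    field_simp [hne ζ hζ]
    ring
  rw [Finset.sum_congr rfl hsplit, Finset.sum_sub_distrib, ← Finset.mul_sum,
    sum_one_div_sub_nthRoots n hn z hz, Finset.sum_const, hα.card_nthRootsFinset]
  have hnne : (n : ℂ) ≠ 0 := Nat.cast_ne_zero.mpr hpos.ne'
  have hzz : z * z ^ (n - 1) = z ^ n := by
    rw [← pow_succ']
    congr 1
    omega
  have h1z : (1 : ℂ) - z ^ n ≠ 0 := fun h => hz (by linear_combination -h)
  rw [show 2 * z * ((n : ℂ) * z ^ (n - 1) / (z ^ n - 1)) =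
      2 * (n : ℂ) * z ^ n / (z ^ n - 1) from by rw [← hzz]; ring]
  field_simp
  ring
end

section
/- Let κ > 0 and let Ω ⊆ {z ∈ ℂ : Re z ≥ κ·|Im z|} be a nonempty open set. If u : ℂ → ℝ is continuous on the closure of Ω, harmonic on Ω, bounded on Ω, and vanishes at every point of the frontier ∂Ω, then u vanishes identically on Ω. -/
open Real

lemma second_deriv_test {φ φ' : ℝ → ℝ} {a : ℝ}
    (hd : ∀ᶠ t in nhds (0:ℝ), HasDerivAt φ (φ' t) t)
    (hd2 : HasDerivAt φ' a 0) (hmax : IsLocalMax φ 0) : a ≤ 0 := by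
  by_contra h
  push_neg at h
  have h0 : φ' 0 = 0 := by
    have := hmax.deriv_eq_zero
    rwa [hd.self_of_nhds.deriv] at this
  have hs : Filter.Tendsto (fun t => φ' t / t) (nhdsWithin 0 {(0:ℝ)}ᶜ) (nhds a) := by
    have h1 := hasDerivAt_iff_tendsto_slope.mp hd2
    have : slope φ' 0 = fun t => φ' t / t := by
      funext t; simp [slope_def_field, h0]
    rwa [this] at h1
  have hpos : ∀ᶠ t in nhdsWithin (0:ℝ) (Set.Ioi 0), 0 < φ' t := by
    have h2 : ∀ᶠ t in nhdsWithin (0:ℝ) (Set.Ioi 0), a/2 < φ' t / t := by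
      have := hs.mono_left (nhdsWithin_mono _ (by intro x hx; simp at hx ⊢; exact ne_of_gt hx))
      exact this.eventually (eventually_gt_nhds (by linarith))
    filter_upwards [h2, self_mem_nhdsWithin] with t h1 h2
    have ht : (0:ℝ) < t := h2
    have : 0 < φ' t / t := lt_trans (by linarith) h1
    rcases div_pos_iff.mp this with ⟨h,_⟩|⟨_,h⟩
    · exact h
    · linarith
  -- get δ > 0 with all conditions on Ioc 0 δ
  rcases Metric.eventually_nhds_iff.mp (hd.and hmax) with ⟨δ₁, hδ₁, H1⟩
  rcases Metric.mem_nhdsWithin_iff.mp hpos with ⟨δ₂, hδ₂, H2⟩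
  set δ := min δ₁ δ₂ / 2 with hδdef
  have hδ : 0 < δ := by positivity
  have hsub : ∀ t ∈ Set.Icc (0:ℝ) δ, HasDerivAt φ (φ' t) t ∧ φ t ≤ φ 0 := by
    intro t ht
    apply H1
    rw [Real.dist_eq]
    rw [abs_of_nonneg (by linarith [ht.1, sub_nonneg.mpr ht.1] : (0:ℝ) ≤ t - 0)]
    have := ht.2
    have : t - 0 ≤ δ := by linarith
    have h3 : δ < δ₁ := by
      have := min_le_left δ₁ δ₂; simp only [hδdef]; linarith
    linarith
  have hmono : StrictMonoOn φ (Set.Icc 0 δ) := by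
    apply strictMonoOn_of_deriv_pos (convex_Icc 0 δ)
    · exact fun t ht => ((hsub t ht).1.continuousAt).continuousWithinAt
    · intro t ht
      rw [interior_Icc] at ht
      rw [((hsub t ⟨le_of_lt ht.1, le_of_lt ht.2⟩).1).deriv]
      apply H2
      constructor
      · rw [Metric.mem_ball, Real.dist_eq, abs_of_pos (by linarith [ht.1] : (0:ℝ) < t - 0)]
        have h3 : δ < δ₂ := by
          have := min_le_right δ₁ δ₂; simp only [hδdef]; linarith
        linarith [ht.2]
      · exact ht.1
  have : φ 0 < φ δ := hmono ⟨le_refl 0, le_of_lt hδ⟩ ⟨le_of_lt hδ, le_refl δ⟩ hδ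
  have := (hsub δ ⟨le_of_lt hδ, le_refl δ⟩).2
  linarith

lemma dir_second_deriv_nonpos {g : ℂ → ℝ} {x : ℂ} (v : ℂ)
    (hg1 : ∀ᶠ y in nhds x, DifferentiableAt ℝ g y)
    (hg2 : DifferentiableAt ℝ (fun y => fderiv ℝ g y v) x)
    (hmax : IsLocalMax g x) :
    fderiv ℝ (fun y => fderiv ℝ g y v) x v ≤ 0 := by
  set L : ℝ → ℂ := fun t => x + t • v with hL
  have hLd : ∀ t : ℝ, HasDerivAt L v t := by
    intro t
    simpa [hL] using ((hasDerivAt_id t).smul_const v).const_add x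
  have hLc : Filter.Tendsto L (nhds 0) (nhds x) := by
    have : Continuous L := by fun_prop
    have h0 : L 0 = x := by simp [hL]
    simpa [h0] using this.tendsto 0
  have hφd : ∀ᶠ t in nhds (0:ℝ), HasDerivAt (fun t => g (L t)) (fderiv ℝ g (L t) v) t := by
    filter_upwards [hLc.eventually hg1] with t ht
    exact (ht.hasFDerivAt.comp_hasDerivAt t (hLd t))
  have hφ2 : HasDerivAt (fun t => fderiv ℝ g (L t) v) (fderiv ℝ (fun y => fderiv ℝ g y v) x v) 0 := by
    have h0 : L 0 = x := by simp [hL]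
    have hg2' : DifferentiableAt ℝ (fun y => fderiv ℝ g y v) (L 0) := by rwa [h0]
    have := hg2'.hasFDerivAt.comp_hasDerivAt 0 (hLd 0)
    rw [h0] at this
    exact this
  have hm : IsLocalMax (fun t => g (L t)) (0:ℝ) := by
    have := hLc.eventually hmax
    simpa [IsLocalMax, IsMaxFilter, hL] using this
  exact second_deriv_test hφd hφ2 hm


/-- derivative of the real part of a complex-differentiable function. -/
lemma hasFDerivAt_re_comp {F : ℂ → ℂ} {c y : ℂ} (h : HasDerivAt F c y) :
    HasFDerivAt (fun z => (F z).re)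
      (Complex.reCLM.comp (((1 : ℂ →L[ℂ] ℂ).smulRight c).restrictScalars ℝ)) y :=
  Complex.reCLM.hasFDerivAt.comp y (h.hasFDerivAt.restrictScalars ℝ)

lemma fderiv_re_comp {F : ℂ → ℂ} {c y : ℂ} (h : HasDerivAt F c y) (v : ℂ) :
    fderiv ℝ (fun z => (F z).re) y v = (c * v).re := by
  rw [(hasFDerivAt_re_comp h).fderiv]
  simp [mul_comm]

/-- second directional derivative of the real part of a twice complex-differentiable function -/
lemma fderiv2_re_comp {F F' : ℂ → ℂ} {a x : ℂ}
    (h1 : ∀ᶠ y in nhds x, HasDerivAt F (F' y) y)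
    (h2 : HasDerivAt F' a x) (v : ℂ) :
    fderiv ℝ (fun y => fderiv ℝ (fun z => (F z).re) y v) x v = (a * v * v).re := by
  have hev : (fun y => fderiv ℝ (fun z => (F z).re) y v) =ᶠ[nhds x]
      (fun y => (F' y * v).re) := by
    filter_upwards [h1] with y hy
    exact fderiv_re_comp hy v
  rw [hev.fderiv_eq]
  have h3 : HasDerivAt (fun y => F' y * v) (a * v) x := h2.mul_const v
  exact fderiv_re_comp h3 v

lemma diff_re_comp_snd {F F' : ℂ → ℂ} {a x : ℂ}
    (h1 : ∀ᶠ y in nhds x, HasDerivAt F (F' y) y)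
    (h2 : HasDerivAt F' a x) (v : ℂ) :
    DifferentiableAt ℝ (fun y => fderiv ℝ (fun z => (F z).re) y v) x := by
  have hev : (fun y => fderiv ℝ (fun z => (F z).re) y v) =ᶠ[nhds x]
      (fun y => (F' y * v).re) := by
    filter_upwards [h1] with y hy
    exact fderiv_re_comp hy v
  have : DifferentiableAt ℝ (fun y => (F' y * v).re) x :=
    (hasFDerivAt_re_comp (h2.mul_const v)).differentiableAt
  exact this.congr_of_eventuallyEq hev

noncomputable def qfun : ℂ → ℝ := fun z => z.re * z.re + z.im * z.im

lemma qfun_hasFDerivAt (y : ℂ) :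
    HasFDerivAt qfun (y.re • Complex.reCLM + y.re • Complex.reCLM
      + (y.im • Complex.imCLM + y.im • Complex.imCLM)) y := by
  have hre : HasFDerivAt (fun z : ℂ => z.re) (Complex.reCLM) y :=
    Complex.reCLM.hasFDerivAt
  have him : HasFDerivAt (fun z : ℂ => z.im) (Complex.imCLM) y :=
    Complex.imCLM.hasFDerivAt
  exact (hre.mul hre).add (him.mul him)

lemma qfun_fderiv (y v : ℂ) : fderiv ℝ qfun y v = 2 * v.re * y.re + 2 * v.im * y.im := by
  rw [(qfun_hasFDerivAt y).fderiv]
  simp [Complex.reCLM_apply, Complex.imCLM_apply]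
  ring

lemma qfun_fderiv_fun (v : ℂ) : (fun y => fderiv ℝ qfun y v)
    = fun y => ((2 * v.re) • Complex.reCLM + (2 * v.im) • Complex.imCLM) y := by
  funext y
  rw [qfun_fderiv]
  simp only [ContinuousLinearMap.add_apply, ContinuousLinearMap.coe_smul',
    Pi.smul_apply, Complex.reCLM_apply, Complex.imCLM_apply, smul_eq_mul]

lemma qfun_second (x v : ℂ) :
    fderiv ℝ (fun y => fderiv ℝ qfun y v) x v = 2 * (v.re * v.re) + 2 * (v.im * v.im) := by
  rw [qfun_fderiv_fun v, ContinuousLinearMap.fderiv]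
  simp
  ring

lemma qfun_second_diff (x v : ℂ) : DifferentiableAt ℝ (fun y => fderiv ℝ qfun y v) x := by
  rw [qfun_fderiv_fun v]
  exact (ContinuousLinearMap.differentiable _).differentiableAt

lemma combo_fderiv {u b q : ℂ → ℝ} {ε η : ℝ} {x : ℂ} (v : ℂ)
    (hu : ∀ᶠ y in nhds x, DifferentiableAt ℝ u y)
    (hu2 : DifferentiableAt ℝ (fun y => fderiv ℝ u y v) x)
    (hb : ∀ᶠ y in nhds x, DifferentiableAt ℝ b y)
    (hb2 : DifferentiableAt ℝ (fun y => fderiv ℝ b y v) x)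
    (hq : ∀ y, DifferentiableAt ℝ q y)
    (hq2 : DifferentiableAt ℝ (fun y => fderiv ℝ q y v) x) :
    DifferentiableAt ℝ (fun y => fderiv ℝ (fun z => u z - ε * b z + η * q z) y v) x ∧
    fderiv ℝ (fun y => fderiv ℝ (fun z => u z - ε * b z + η * q z) y v) x v
      = fderiv ℝ (fun y => fderiv ℝ u y v) x v - ε * fderiv ℝ (fun y => fderiv ℝ b y v) x v
        + η * fderiv ℝ (fun y => fderiv ℝ q y v) x v := by
  have hev : (fun y => fderiv ℝ (fun z => u z - ε * b z + η * q z) y v) =ᶠ[nhds x]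
      (fun y => fderiv ℝ u y v - ε * fderiv ℝ b y v + η * fderiv ℝ q y v) := by
    filter_upwards [hu, hb] with y h1 h2
    rw [fderiv_fun_add (h1.fun_sub (h2.const_mul ε)) ((hq y).const_mul η),
      fderiv_fun_sub h1 (h2.const_mul ε), fderiv_const_mul h2 ε, fderiv_const_mul (hq y) η]
    simp
  have hdiff : DifferentiableAt ℝ
      (fun y => fderiv ℝ u y v - ε * fderiv ℝ b y v + η * fderiv ℝ q y v) x :=
    ((hu2.sub (hb2.const_mul ε)).add (hq2.const_mul η))
  constructor
  · exact hdiff.congr_of_eventuallyEq hev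
  · rw [Filter.EventuallyEq.fderiv_eq hev]
    rw [fderiv_fun_add (hu2.fun_sub (hb2.const_mul ε)) (hq2.const_mul η),
      fderiv_fun_sub hu2 (hb2.const_mul ε), fderiv_const_mul hb2 ε, fderiv_const_mul hq2 η]
    simp

lemma shift_slitPlane {z : ℂ} (hz : 0 ≤ z.re) : z + 1 ∈ Complex.slitPlane := by
  rw [Complex.mem_slitPlane_iff]
  left
  simp only [Complex.add_re, Complex.one_re]
  linarith

lemma barrier_hasDerivAt {β : ℝ} {z : ℂ} (hz : 0 ≤ z.re) :
    HasDerivAt (fun w : ℂ => (w + 1) ^ (β : ℂ))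
      ((β : ℂ) * (z + 1) ^ ((β : ℂ) - 1)) z := by
  have h := HasDerivAt.cpow_const (c := (β : ℂ)) ((hasDerivAt_id z).add_const 1)
    (shift_slitPlane hz)
  simpa using h

lemma barrier_deriv_hasDerivAt {β : ℝ} {z : ℂ} (hz : 0 ≤ z.re) :
    HasDerivAt (fun w : ℂ => (β : ℂ) * (w + 1) ^ ((β : ℂ) - 1))
      ((β : ℂ) * ((β : ℂ) - 1) * (z + 1) ^ ((β : ℂ) - 2)) z := by
  have h := (HasDerivAt.cpow_const (c := (β : ℂ) - 1) ((hasDerivAt_id z).add_const 1)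
    (shift_slitPlane hz)).const_mul (β : ℂ)
  simp only [id_eq, mul_one] at h
  have h2 : (β : ℂ) - 1 - 1 = (β : ℂ) - 2 := by ring
  rw [h2] at h
  rw [mul_assoc]
  exact h

lemma barrier_re_eq {β : ℝ} {z : ℂ} (hz : 0 ≤ z.re) :
    ((z + 1) ^ (β : ℂ)).re
      = ‖z + 1‖ ^ β * Real.cos (Complex.arg (z + 1) * β) := by
  have hne : z + 1 ≠ 0 := Complex.slitPlane_ne_zero (shift_slitPlane hz)
  rw [Complex.cpow_def_of_ne_zero hne, Complex.exp_re]
  have h1 : (Complex.log (z + 1) * (β : ℂ)).re = Real.log (‖z + 1‖) * β := by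
    simp [Complex.mul_re, Complex.log_re, Complex.log_im]
  have h2 : (Complex.log (z + 1) * (β : ℂ)).im = Complex.arg (z + 1) * β := by
    simp [Complex.mul_im, Complex.log_re, Complex.log_im]
  rw [h1, h2, ← Real.rpow_def_of_pos (norm_pos_iff.mpr hne)]

lemma arg_shift_le {κ : ℝ} (hκ : 0 < κ) {z : ℂ} (hz : κ * |z.im| ≤ z.re) :
    |Complex.arg (z + 1)| ≤ Real.arctan κ⁻¹ := by
  have hre0 : 0 ≤ z.re := le_trans (by positivity) hz
  have hrepos : 0 < (z + 1).re := by simp; linarith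
  have habs : |Complex.arg (z + 1)| < π / 2 :=
    Complex.abs_arg_lt_pi_div_two_iff.mpr (Or.inl hrepos)
  have harg : Complex.arg (z + 1) = Real.arctan (z.im / (z.re + 1)) := by
    have h1 := Complex.tan_arg (z + 1)
    have h2 := Real.arctan_tan (abs_lt.mp habs).1 (abs_lt.mp habs).2
    rw [h1] at h2
    rw [← h2]
    norm_num
  have hq : |z.im / (z.re + 1)| ≤ κ⁻¹ := by
    rw [abs_div, abs_of_pos (by linarith : (0:ℝ) < z.re + 1),
      div_le_iff₀ (by linarith : (0:ℝ) < z.re + 1)]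
    have h3 : κ * |z.im| ≤ z.re + 1 := by linarith
    have h4 := mul_le_mul_of_nonneg_left h3 (le_of_lt (inv_pos.mpr hκ))
    rw [← mul_assoc, inv_mul_cancel₀ (ne_of_gt hκ), one_mul] at h4
    linarith [h4]
  rw [harg, abs_le]
  constructor
  · rw [← Real.arctan_neg]
    exact Real.arctan_strictMono.monotone (by linarith [abs_le.mp hq |>.1])
  · exact Real.arctan_strictMono.monotone (abs_le.mp hq).2

lemma qfun_continuous : Continuous qfun :=
  (Complex.continuous_re.mul Complex.continuous_re).add
    (Complex.continuous_im.mul Complex.continuous_im)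

lemma qfun_diff (y : ℂ) : DifferentiableAt ℝ qfun y := (qfun_hasFDerivAt y).differentiableAt

/-- On an open set contained in a wedge, a bounded harmonic function which is
continuous up to the boundary and vanishes on the frontier vanishes
identically. -/
theorem bounded_harmonic_on_wedge_domain_eq_zero
    (κ : ℝ) (hκ : 0 < κ) (Ω : Set ℂ) (hne : Ω.Nonempty) (hopen : IsOpen Ω)
    (hwedge : Ω ⊆ {z : ℂ | κ * |z.im| ≤ z.re})
    (u : ℂ → ℝ)
    (hcont : ContinuousOn u (closure Ω))
    (hharm : HarmonicOnSet u Ω)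
    (hbdd : ∃ C : ℝ, ∀ z ∈ Ω, |u z| ≤ C)
    (hbd : ∀ z ∈ frontier Ω, u z = 0) :
    ∀ z ∈ Ω, u z = 0 := by
  suffices key : ∀ v : ℂ → ℝ, ContinuousOn v (closure Ω) → HarmonicOnSet v Ω →
      (∃ C : ℝ, ∀ z ∈ Ω, |v z| ≤ C) → (∀ z ∈ frontier Ω, v z = 0) →
      ∀ z ∈ Ω, v z ≤ 0 by
    intro z hz
    have h1 := key u hcont hharm hbdd hbd z hz
    have hharmneg : HarmonicOnSet (fun w => -u w) Ω := by
      refine ⟨hharm.1.neg, fun w hw => ?_⟩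
      have e1 : (fun y => fderiv ℝ (fun z => -u z) y 1) = fun y => -(fderiv ℝ u y 1) := by
        funext y; rw [fderiv_fun_neg]; simp
      have e2 : (fun y => fderiv ℝ (fun z => -u z) y Complex.I)
          = fun y => -(fderiv ℝ u y Complex.I) := by
        funext y; rw [fderiv_fun_neg]; simp
      rw [e1, e2, fderiv_fun_neg, fderiv_fun_neg]
      have := hharm.2 w hw
      simp only [ContinuousLinearMap.neg_apply]
      linarith
    have h2 := key (fun w => -u w) hcont.neg hharmneg
      (by obtain ⟨C, hC⟩ := hbdd; exact ⟨C, fun z hz => by simpa using hC z hz⟩)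
      (fun w hw => by simp [hbd w hw]) z hz
    linarith
  intro v hvcont hvharm hvbdd hvbd z₀ hz₀
  -- wedge is closed, so the closure of Ω lies in the wedge
  have hwclosed : IsClosed {z : ℂ | κ * |z.im| ≤ z.re} :=
    isClosed_le (continuous_const.mul (continuous_abs.comp Complex.continuous_im))
      Complex.continuous_re
  have hclΩ : closure Ω ⊆ {z : ℂ | κ * |z.im| ≤ z.re} := closure_minimal hwedge hwclosed
  -- the exponent
  set θ := Real.arctan κ⁻¹ with hθdef
  have hθ0 : 0 < θ := by
    have := Real.arctan_strictMono (show (0:ℝ) < κ⁻¹ by positivity)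
    rwa [Real.arctan_zero] at this
  have hθπ : θ < π / 2 := Real.arctan_lt_pi_div_two _
  set β := (1 + π / (2 * θ)) / 2 with hβdef
  have hπθ : 1 < π / (2 * θ) := by
    rw [lt_div_iff₀ (by linarith)]
    linarith
  have hβ1 : 1 < β := by rw [hβdef]; linarith
  have hβθ : β * θ < π / 2 := by
    have h1 : β < π / (2 * θ) := by rw [hβdef]; linarith
    calc β * θ < (π / (2 * θ)) * θ := by exact mul_lt_mul_of_pos_right h1 hθ0
    _ = π / 2 := by field_simp
  set c := Real.cos (θ * β) with hcdef
  have hc0 : 0 < c := by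
    apply Real.cos_pos_of_mem_Ioo
    constructor
    · have := Real.pi_pos; nlinarith
    · rw [mul_comm]; exact hβθ
  set b := fun z : ℂ => ((z + 1) ^ (β : ℂ)).re with hbdef
  -- lower bounds for the barrier on the wedge
  have hb_lb : ∀ z : ℂ, κ * |z.im| ≤ z.re →
      c ≤ b z ∧ c * ‖z‖ ^ β ≤ b z := by
    intro z hzw
    have hre0 : 0 ≤ z.re := le_trans (by positivity) hzw
    have hbz : b z = ‖z + 1‖ ^ β * Real.cos (Complex.arg (z + 1) * β) := by
      rw [hbdef]; exact barrier_re_eq hre0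
    have habs1 : 1 ≤ ‖z + 1‖ := by
      rw [Complex.norm_def]
      rw [show (1:ℝ) = Real.sqrt 1 by simp]
      apply Real.sqrt_le_sqrt
      rw [Complex.normSq_apply]
      simp only [Complex.add_re, Complex.one_re, Complex.add_im, Complex.one_im, add_zero]
      nlinarith [sq_nonneg z.im]
    have habs2 : ‖z‖ ≤ ‖z + 1‖ := by
      rw [Complex.norm_def, Complex.norm_def]
      apply Real.sqrt_le_sqrt
      rw [Complex.normSq_apply, Complex.normSq_apply]
      simp only [Complex.add_re, Complex.one_re, Complex.add_im, Complex.one_im, add_zero]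
      nlinarith
    have hcos : c ≤ Real.cos (Complex.arg (z + 1) * β) := by
      have ha := arg_shift_le hκ hzw
      have h1 : |Complex.arg (z + 1) * β| ≤ θ * β := by
        rw [abs_mul, abs_of_pos (by linarith : (0:ℝ) < β)]
        exact mul_le_mul_of_nonneg_right ha (by linarith)
      calc c = Real.cos (θ * β) := rfl
        _ ≤ Real.cos |Complex.arg (z + 1) * β| := by
            apply Real.cos_le_cos_of_nonneg_of_le_pi (abs_nonneg _) _ h1
            have := Real.pi_pos; linarith
        _ = Real.cos (Complex.arg (z + 1) * β) := Real.cos_abs _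
    have h1β : 1 ≤ ‖z + 1‖ ^ β := Real.one_le_rpow habs1 (by linarith)
    have h2β : ‖z‖ ^ β ≤ ‖z + 1‖ ^ β :=
      Real.rpow_le_rpow (norm_nonneg z) habs2 (by linarith)
    have hzβ0 : 0 ≤ ‖z‖ ^ β := Real.rpow_nonneg (norm_nonneg z) β
    constructor
    · rw [hbz]; nlinarith
    · rw [hbz]; nlinarith
  -- continuity of the barrier
  have hb_cont : ∀ z : ℂ, 0 ≤ z.re → ContinuousAt b z := by
    intro z hz
    exact Complex.continuous_re.continuousAt.comp (barrier_hasDerivAt (β := β) hz).continuousAt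
  have hbz₀pos : 0 < b z₀ := lt_of_lt_of_le hc0 (hb_lb z₀ (hwedge hz₀)).1
  -- it suffices to prove the epsilon-claim
  suffices hεclaim : ∀ ε : ℝ, 0 < ε → v z₀ ≤ ε * b z₀ by
    by_contra hcon
    push_neg at hcon
    have h := hεclaim (v z₀ / (2 * b z₀)) (by positivity)
    have heq : v z₀ / (2 * b z₀) * b z₀ = v z₀ / 2 := by
      field_simp
    rw [heq] at h
    linarith
  intro ε hε
  obtain ⟨C, hC⟩ := hvbdd
  have hC0 : 0 ≤ C := le_trans (abs_nonneg _) (hC z₀ hz₀)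
  set R₀ := (max 1 (C / (ε * c))) ^ (β⁻¹) with hR₀def
  set R := max (‖z₀‖ + 1) (R₀ + 1) with hRdef
  have hR₀0 : 0 ≤ R₀ := Real.rpow_nonneg (le_trans zero_le_one (le_max_left _ _)) _
  have hRpos : 0 < R :=
    lt_of_lt_of_le (by positivity) (le_max_left _ _)
  have hz₀R : ‖z₀‖ < R := lt_of_lt_of_le (lt_add_one _) (le_max_left _ _)
  have hRC : C ≤ ε * (c * R ^ β) := by
    have h1 : R₀ ≤ R := le_trans (by linarith) (le_max_right _ _)
    have h2 : R₀ ^ β = max 1 (C / (ε * c)) := by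
      rw [hR₀def, ← Real.rpow_mul (le_trans zero_le_one (le_max_left _ _)),
        inv_mul_cancel₀ (by linarith : β ≠ 0), Real.rpow_one]
    have h3 : R₀ ^ β ≤ R ^ β := Real.rpow_le_rpow hR₀0 h1 (by linarith)
    have h4 : C / (ε * c) ≤ R ^ β := le_trans (le_trans (le_max_right _ _) h2.ge) h3
    calc C = (ε * c) * (C / (ε * c)) := by field_simp
      _ ≤ (ε * c) * (R ^ β) := by
          apply mul_le_mul_of_nonneg_left h4 (by positivity)
      _ = ε * (c * R ^ β) := by ring
  suffices hηclaim : ∀ η : ℝ, 0 < η → v z₀ ≤ ε * b z₀ + η * R ^ 2 by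
    apply le_of_forall_pos_le_add
    intro δ hδ
    have h := hηclaim (δ / R ^ 2) (by positivity)
    have heq : δ / R ^ 2 * R ^ 2 = δ := by field_simp
    linarith [h, heq.le, heq.ge]
  intro η hη
  set S := Ω ∩ Metric.ball 0 R with hSdef
  set W := fun z : ℂ => v z - ε * b z + η * qfun z with hWdef
  have hz₀S : z₀ ∈ S := ⟨hz₀, by simpa [Metric.mem_ball, Complex.dist_eq] using hz₀R⟩
  have hKcl : closure S ⊆ closure Ω := closure_mono Set.inter_subset_left
  have hKw : ∀ z ∈ closure S, κ * |z.im| ≤ z.re := fun z hz => hclΩ (hKcl hz)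
  have hKball : closure S ⊆ Metric.closedBall 0 R := by
    exact le_trans (closure_mono Set.inter_subset_right) Metric.closure_ball_subset_closedBall
  have hcomp : IsCompact (closure S) :=
    Metric.isCompact_of_isClosed_isBounded isClosed_closure
      ((Metric.isBounded_ball.subset Set.inter_subset_right).closure)
  have hWcont : ContinuousOn W (closure S) := by
    apply ContinuousOn.add
    · apply ContinuousOn.sub (hvcont.mono hKcl)
      exact continuousOn_const.mul (fun z hz =>
        (hb_cont z (le_trans (by positivity) (hKw z hz))).continuousWithinAt)
    · exact (continuous_const.mul qfun_continuous).continuousOn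
  obtain ⟨x, hxK, hxmax⟩ := hcomp.exists_isMaxOn ⟨z₀, subset_closure hz₀S⟩ hWcont
  have habx : ‖x‖ ≤ R := by
    have h := hKball hxK
    simpa [Complex.dist_eq] using h
  have hqx : qfun x ≤ R ^ 2 := by
    have h1 : qfun x = ‖x‖ ^ 2 := by
      rw [Complex.sq_norm]
      simp [qfun, Complex.normSq_apply]
    rw [h1]
    nlinarith [norm_nonneg x]
  have hqz₀ : 0 ≤ qfun z₀ := add_nonneg (mul_self_nonneg _) (mul_self_nonneg _)
  have hWx : W x ≤ η * R ^ 2 := by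
    by_cases hxS : x ∈ S
    · exfalso
      have hxΩ : x ∈ Ω := hxS.1
      have hΩx : Ω ∈ nhds x := hopen.mem_nhds hxΩ
      have hloc : IsLocalMax W x := by
        filter_upwards [(hopen.inter Metric.isOpen_ball).mem_nhds hxS] with y hy
        exact hxmax (subset_closure hy)
      have hvdiffOn := hvharm.1.differentiableOn (by norm_num : (2:WithTop ℕ∞) ≠ 0)
      have hvdiff : ∀ᶠ y in nhds x, DifferentiableAt ℝ v y := by
        filter_upwards [hΩx] with y hy
        exact (hvdiffOn y hy).differentiableAt (hopen.mem_nhds hy)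
      have hv2 : ∀ vd : ℂ, DifferentiableAt ℝ (fun y => fderiv ℝ v y vd) x := by
        intro vd
        have h1 : ContDiffAt ℝ 2 v x := hvharm.1.contDiffAt (hopen.mem_nhds hxΩ)
        have h2 : ContDiffAt ℝ 1 (fderiv ℝ v) x := h1.fderiv_right (by norm_num)
        have h3 : DifferentiableAt ℝ (fderiv ℝ v) x := h2.differentiableAt (by norm_num)
        exact (ContinuousLinearMap.differentiableAt (ContinuousLinearMap.apply ℝ ℝ vd)).comp x h3
      have hbF : ∀ᶠ y in nhds x, HasDerivAt (fun w : ℂ => (w + 1) ^ (β:ℂ))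
          ((β:ℂ) * (y + 1) ^ ((β:ℂ) - 1)) y := by
        filter_upwards [hΩx] with y hy
        exact barrier_hasDerivAt (le_trans (by positivity) (hwedge hy))
      have hxre : (0:ℝ) ≤ x.re := le_trans (by positivity) (hwedge hxΩ)
      have hbF2 : HasDerivAt (fun w : ℂ => (β:ℂ) * (w + 1) ^ ((β:ℂ) - 1))
          ((β:ℂ) * ((β:ℂ)-1) * (x+1) ^ ((β:ℂ)-2)) x := barrier_deriv_hasDerivAt hxre
      have hbdiff : ∀ᶠ y in nhds x, DifferentiableAt ℝ b y := by
        filter_upwards [hbF] with y hy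
        exact (hasFDerivAt_re_comp hy).differentiableAt
      have hb2 : ∀ vd : ℂ, DifferentiableAt ℝ (fun y => fderiv ℝ b y vd) x :=
        fun vd => diff_re_comp_snd hbF hbF2 vd
      have hbsec : ∀ vd : ℂ, fderiv ℝ (fun y => fderiv ℝ b y vd) x vd
          = (((β:ℂ) * ((β:ℂ)-1) * (x+1) ^ ((β:ℂ)-2)) * vd * vd).re :=
        fun vd => fderiv2_re_comp hbF hbF2 vd
      have hcombo1 := combo_fderiv (u := v) (b := b) (q := qfun) (ε := ε) (η := η)
        1 hvdiff (hv2 1) hbdiff (hb2 1) qfun_diff (qfun_second_diff x 1)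
      have hcomboI := combo_fderiv (u := v) (b := b) (q := qfun) (ε := ε) (η := η)
        Complex.I hvdiff (hv2 Complex.I) hbdiff (hb2 Complex.I) qfun_diff
        (qfun_second_diff x Complex.I)
      have hWdiff : ∀ᶠ y in nhds x, DifferentiableAt ℝ W y := by
        filter_upwards [hvdiff, hbdiff] with y h1 h2
        exact (h1.sub (h2.const_mul ε)).add ((qfun_diff y).const_mul η)
      have hd1 : fderiv ℝ (fun y => fderiv ℝ (fun z => v z - ε * b z + η * qfun z) y 1) x 1
          ≤ 0 := dir_second_deriv_nonpos 1 hWdiff hcombo1.1 hloc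
      have hdI : fderiv ℝ (fun y => fderiv ℝ (fun z => v z - ε * b z + η * qfun z) y
          Complex.I) x Complex.I ≤ 0 :=
        dir_second_deriv_nonpos Complex.I hWdiff hcomboI.1 hloc
      rw [hcombo1.2] at hd1
      rw [hcomboI.2] at hdI
      have hq1 : fderiv ℝ (fun y => fderiv ℝ qfun y 1) x 1 = 2 := by
        rw [qfun_second]; simp
      have hqI : fderiv ℝ (fun y => fderiv ℝ qfun y Complex.I) x Complex.I = 2 := by
        rw [qfun_second]; simp
      rw [hq1, hbsec 1] at hd1
      rw [hqI, hbsec Complex.I] at hdI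
      have hbsum : (((β:ℂ) * ((β:ℂ)-1) * (x+1)^((β:ℂ)-2)) * 1 * 1).re
          + (((β:ℂ) * ((β:ℂ)-1) * (x+1)^((β:ℂ)-2)) * Complex.I * Complex.I).re = 0 := by
        have h : ((β:ℂ) * ((β:ℂ)-1) * (x+1)^((β:ℂ)-2)) * Complex.I * Complex.I
            = -(((β:ℂ) * ((β:ℂ)-1) * (x+1)^((β:ℂ)-2)) * 1 * 1) := by
          rw [mul_assoc, Complex.I_mul_I]; ring
        rw [h, Complex.neg_re]; ring
      have hvsum := hvharm.2 x hxΩ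
      have hmulsum : ε * (((β:ℂ) * ((β:ℂ)-1) * (x+1)^((β:ℂ)-2)) * 1 * 1).re
          + ε * (((β:ℂ) * ((β:ℂ)-1) * (x+1)^((β:ℂ)-2)) * Complex.I * Complex.I).re = 0 := by
        rw [← mul_add, hbsum, mul_zero]
      linarith
    · have hxw : κ * |x.im| ≤ x.re := hKw x hxK
      by_cases hxΩ : x ∈ Ω
      · have hnb : R ≤ ‖x‖ := by
          by_contra hcon2
          push_neg at hcon2
          exact hxS ⟨hxΩ, by simpa [Metric.mem_ball, Complex.dist_eq] using hcon2⟩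
        have habseq : ‖x‖ = R := le_antisymm habx hnb
        have hbx : c * R ^ β ≤ b x := by
          have h := (hb_lb x hxw).2
          rwa [habseq] at h
        have hvx : v x ≤ C := le_trans (le_abs_self _) (hC x hxΩ)
        have hεb : ε * (c * R ^ β) ≤ ε * b x := mul_le_mul_of_nonneg_left hbx (le_of_lt hε)
        have hηq : η * qfun x ≤ η * R ^ 2 := mul_le_mul_of_nonneg_left hqx (le_of_lt hη)
        show v x - ε * b x + η * qfun x ≤ η * R ^ 2
        linarith [hRC]
      · have hxfr : x ∈ frontier Ω := by
          rw [frontier, hopen.interior_eq]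
          exact ⟨hKcl hxK, hxΩ⟩
        have hvx : v x = 0 := hvbd x hxfr
        have hbx : c ≤ b x := (hb_lb x hxw).1
        have hηq : η * qfun x ≤ η * R ^ 2 := mul_le_mul_of_nonneg_left hqx (le_of_lt hη)
        have hεb : 0 < ε * b x := mul_pos hε (lt_of_lt_of_le hc0 hbx)
        show v x - ε * b x + η * qfun x ≤ η * R ^ 2
        linarith
  have hfin : v z₀ - ε * b z₀ + η * qfun z₀ ≤ v x - ε * b x + η * qfun x :=
    hxmax (subset_closure hz₀S)
  have hWx' : v x - ε * b x + η * qfun x ≤ η * R ^ 2 := hWx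
  have hηq0 : 0 ≤ η * qfun z₀ := mul_nonneg (le_of_lt hη) hqz₀
  linarith
end

section
/- Let H be a function holomorphic on an open set of ℂ containing the closed unit disk, and suppose |H(z)| = 1 for every z with |z| = 1. Then there exist m ∈ ℕ, points z₁, …, z_m in the open unit disk, and a constant C ∈ ℂ with |C| = 1 such that H(z) = C · Π_{k=1}^{m} (z − z_k)/(conj(z_k)·z − 1) for every z in the closed unit disk. -/
open Metric Set Filter Function

private noncomputable def ordnat (H : ℂ → ℂ) (z : ℂ) : ℕ :=
  open scoped Classical in
  if h : AnalyticAt ℂ H z then (analyticOrderAt H z).toNat else 0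

private lemma ordnat_eq {H : ℂ → ℂ} {z : ℂ} (h : AnalyticAt ℂ H z) :
    ordnat H z = (analyticOrderAt H z).toNat := by
  classical
  simp only [ordnat]
  rw [dif_pos h]

private lemma not_locally_zero {R : ℝ} (hR : 1 < R) {H : ℂ → ℂ}
    (hH : DifferentiableOn ℂ H (Metric.ball 0 R))
    (hmod : ∀ z : ℂ, ‖z‖ = 1 → ‖H z‖ = 1)
    {z : ℂ} (hz : z ∈ Metric.ball (0:ℂ) R) :
    ¬ (∀ᶠ w in nhds z, H w = 0) := by
  intro h
  have hA : AnalyticOnNhd ℂ H (Metric.ball 0 R) := hH.analyticOnNhd Metric.isOpen_ball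
  have h1 : (1:ℂ) ∈ Metric.ball (0:ℂ) R := by
    simp only [Metric.mem_ball, dist_zero_right, norm_one]; exact hR
  have heq := hA.eqOn_zero_of_preconnected_of_frequently_eq_zero
      (convex_ball (0:ℂ) R).isPreconnected hz
      ((h.filter_mono nhdsWithin_le_nhds).frequently)
  have := hmod 1 (by simp)
  rw [heq h1] at this
  simp at this

private lemma order_unit_mul {f g u : ℂ → ℂ} {z : ℂ} (hg : AnalyticAt ℂ g z)
    (hu : AnalyticAt ℂ u z) (hu0 : u z ≠ 0)
    (heq : ∀ᶠ w in nhds z, f w = g w * u w) {n : ℕ} (hn : analyticOrderAt g z = n) :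
    ∃ hf : AnalyticAt ℂ f z, analyticOrderAt f z = n := by
  have hf : AnalyticAt ℂ f z := (hg.mul hu).congr (EventuallyEq.symm heq)
  refine ⟨hf, ?_⟩
  obtain ⟨g', hg', hg'0, hev⟩ := (hg.analyticOrderAt_eq_natCast (n := n)).mp hn
  refine (hf.analyticOrderAt_eq_natCast (n := n)).mpr ⟨fun w => g' w * u w, hg'.mul hu, mul_ne_zero hg'0 hu0, ?_⟩
  filter_upwards [heq, hev] with w h1 h2
  rw [h1, h2, smul_eq_mul, smul_eq_mul]
  ring

private lemma order_mul_sub {g : ℂ → ℂ} {a : ℂ} (hg : AnalyticAt ℂ g a) {n : ℕ}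
    (hn : analyticOrderAt g a = n) :
    ∃ hf : AnalyticAt ℂ (fun w => g w * (w - a)) a, analyticOrderAt (fun w => g w * (w - a)) a = (n + 1 : ℕ) := by
  have hf : AnalyticAt ℂ (fun w => g w * (w - a)) a :=
    hg.mul ((analyticAt_id).sub analyticAt_const)
  refine ⟨hf, ?_⟩
  obtain ⟨g', hg', hg'0, hev⟩ := (hg.analyticOrderAt_eq_natCast (n := n)).mp hn
  refine (hf.analyticOrderAt_eq_natCast (n := n + 1)).mpr ⟨g', hg', hg'0, ?_⟩
  filter_upwards [hev] with w h1
  rw [h1, smul_eq_mul, smul_eq_mul]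
  ring
-- denominator nonzero
private lemma denom_ne_zero {a z : ℂ} (ha : ‖a‖ < 1) (hz : ‖z‖ ≤ 1) :
    (starRingEnd ℂ) a * z - 1 ≠ 0 := by
  intro h
  have h1 : (starRingEnd ℂ) a * z = 1 := by linear_combination h
  have : ‖(starRingEnd ℂ) a * z‖ = 1 := by rw [h1]; simp
  rw [norm_mul, Complex.norm_conj] at this
  nlinarith [norm_nonneg z, norm_nonneg a]

private lemma blaschke_step {R : ℝ} (hR : 1 < R) {H : ℂ → ℂ}
    (hH : DifferentiableOn ℂ H (Metric.ball 0 R))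
    {a : ℂ} (ha : ‖a‖ < 1) (ha0 : H a = 0) :
    ∃ H1 : ℂ → ℂ, DifferentiableOn ℂ H1 (Metric.ball 0 R) ∧
      (∀ z ∈ Metric.closedBall (0:ℂ) 1,
        H z = H1 z * ((z - a) / ((starRingEnd ℂ) a * z - 1))) ∧
      (∀ z : ℂ, ‖z‖ = 1 → ‖H1 z‖ = ‖H z‖) := by
  have haR : a ∈ Metric.ball (0:ℂ) R := by
    simp only [Metric.mem_ball, dist_zero_right]; linarith
  have hmem : Metric.ball (0:ℂ) R ∈ nhds a := Metric.isOpen_ball.mem_nhds haR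
  refine ⟨fun z => dslope H a z * ((starRingEnd ℂ) a * z - 1), ?_, ?_, ?_⟩
  · exact ((Complex.differentiableOn_dslope hmem).mpr hH).mul
      (((differentiable_const _).mul differentiable_id).sub (differentiable_const _)).differentiableOn
  · intro z hz
    have hz1 : ‖z‖ ≤ 1 := by
      simpa [Metric.mem_closedBall, dist_zero_right] using hz
    have hd : (starRingEnd ℂ) a * z - 1 ≠ 0 := denom_ne_zero ha hz1
    rcases eq_or_ne z a with rfl | hne
    · simp [ha0]
    · beta_reduce
      rw [dslope_of_ne H hne, slope_def_field, ha0, sub_zero]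
      have hza : z - a ≠ 0 := sub_ne_zero.mpr hne
      field_simp
      have hd' : z * (starRingEnd ℂ) a - 1 ≠ 0 := by rwa [mul_comm] at hd
      rw [mul_div_assoc, div_self hd', mul_one]
  · intro z hz1
    have hne : z ≠ a := by intro h; rw [h] at hz1; exact absurd hz1 (ne_of_lt ha)
    have hza : z - a ≠ 0 := sub_ne_zero.mpr hne
    have key : (starRingEnd ℂ) a * z - 1 = z * ((starRingEnd ℂ) a - (starRingEnd ℂ) z) := by
      have : (z : ℂ) * (starRingEnd ℂ) z = 1 := by
        rw [mul_comm, Complex.normSq_eq_conj_mul_self.symm]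
        norm_cast
        simp [Complex.normSq_eq_norm_sq, hz1]
      linear_combination this
    have habs : ‖(starRingEnd ℂ) a * z - 1‖ = ‖z - a‖ := by
      rw [key, norm_mul, hz1, one_mul, ← map_sub (starRingEnd ℂ) a z, Complex.norm_conj,
        norm_sub_rev]
    beta_reduce
    rw [dslope_of_ne H hne, slope_def_field, ha0, sub_zero, norm_mul, habs, norm_div]
    exact div_mul_cancel₀ _ (norm_ne_zero_iff.mpr hza)
private lemma blaschke_const {R : ℝ} (hR : 1 < R) {H : ℂ → ℂ}
    (hH : DifferentiableOn ℂ H (Metric.ball 0 R))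
    (hmod : ∀ z : ℂ, ‖z‖ = 1 → ‖H z‖ = 1)
    (h0 : ∀ z ∈ Metric.closedBall (0:ℂ) 1, H z ≠ 0) :
    ∃ C : ℂ, ‖C‖ = 1 ∧ ∀ z ∈ Metric.closedBall (0:ℂ) 1, H z = C := by
  have hsub : Metric.closedBall (0:ℂ) 1 ⊆ Metric.ball 0 R := Metric.closedBall_subset_ball hR
  have hcl : closure (Metric.ball (0:ℂ) 1) = Metric.closedBall 0 1 :=
    closure_ball 0 one_ne_zero
  have hfr : frontier (Metric.ball (0:ℂ) 1) = Metric.sphere 0 1 :=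
    frontier_ball 0 one_ne_zero
  have hd : DiffContOnCl ℂ H (Metric.ball 0 1) :=
    ⟨hH.mono (Metric.ball_subset_ball hR.le), by
      rw [hcl]; exact hH.continuousOn.mono hsub⟩
  have hfr1 : ∀ w ∈ frontier (Metric.ball (0:ℂ) 1), ‖H w‖ = 1 := by
    intro w hw
    rw [hfr] at hw
    exact hmod w (by simpa [Complex.dist_eq] using hw)
  have hle : ∀ z ∈ Metric.closedBall (0:ℂ) 1, ‖H z‖ ≤ 1 := by
    intro z hz
    exact Complex.norm_le_of_forall_mem_frontier_norm_le Metric.isBounded_ball hd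
      (fun w hw => le_of_eq (hfr1 w hw)) (hcl ▸ hz)
  have hdinv : DiffContOnCl ℂ (fun z => (H z)⁻¹) (Metric.ball 0 1) := by
    refine ⟨DifferentiableOn.inv (hH.mono (Metric.ball_subset_ball hR.le))
      (fun x hx => h0 x (Metric.ball_subset_closedBall hx)), ?_⟩
    rw [hcl]
    exact ContinuousOn.inv₀ (hH.continuousOn.mono hsub) h0
  have hge : ∀ z ∈ Metric.closedBall (0:ℂ) 1, 1 ≤ ‖H z‖ := by
    intro z hz
    have := Complex.norm_le_of_forall_mem_frontier_norm_le Metric.isBounded_ball hdinv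
      (C := 1) (fun w hw => by
        rw [norm_inv, hfr1 w hw]; norm_num) (hcl ▸ hz)
    rw [norm_inv] at this
    have hpos : 0 < ‖H z‖ := norm_pos_iff.mpr (h0 z hz)
    rw [inv_le_one_iff₀] at this
    rcases this with h | h
    · linarith
    · exact h
  have heq1 : ∀ z ∈ Metric.closedBall (0:ℂ) 1, ‖H z‖ = 1 :=
    fun z hz => le_antisymm (hle z hz) (hge z hz)
  have hmax : IsMaxOn (norm ∘ H) (Metric.ball (0:ℂ) 1) 0 := by
    intro x hx
    simp only [Function.comp_apply, Set.mem_setOf_eq]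
    rw [heq1 x (Metric.ball_subset_closedBall hx),
      heq1 0 (Metric.mem_closedBall_self zero_le_one)]
  have hconst := Complex.eqOn_closure_of_isPreconnected_of_isMaxOn_norm
    (convex_ball (0:ℂ) 1).isPreconnected Metric.isOpen_ball hd
    (Metric.mem_ball_self one_pos) hmax
  refine ⟨H 0, heq1 0 (Metric.mem_closedBall_self zero_le_one), fun z hz => ?_⟩
  have := hconst (hcl ▸ hz : z ∈ closure (Metric.ball (0:ℂ) 1))
  simpa using this
private lemma order_exists {R : ℝ} (hR : 1 < R) {H : ℂ → ℂ}
    (hH : DifferentiableOn ℂ H (Metric.ball 0 R))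
    (hmod : ∀ z : ℂ, ‖z‖ = 1 → ‖H z‖ = 1)
    {z : ℂ} (hz : z ∈ Metric.ball (0:ℂ) R) :
    ∃ (h : AnalyticAt ℂ H z) (m : ℕ), analyticOrderAt H z = m := by
  have hA : AnalyticAt ℂ H z := (hH.analyticOnNhd Metric.isOpen_ball) z hz
  refine ⟨hA, ?_⟩
  have : analyticOrderAt H z ≠ ⊤ := by
    rw [Ne, analyticOrderAt_eq_top]
    exact not_locally_zero hR hH hmod hz
  obtain ⟨m, hm⟩ := WithTop.ne_top_iff_exists.mp this
  exact ⟨m, hm.symm⟩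

private lemma order_pos_of_zero {H : ℂ → ℂ} {a : ℂ} (h : AnalyticAt ℂ H a) (ha0 : H a = 0)
    {m : ℕ} (hm : analyticOrderAt H a = m) : 1 ≤ m := by
  rcases Nat.eq_zero_or_pos m with rfl | h1
  · exfalso
    obtain ⟨g, hg, hg0, hev⟩ := (h.analyticOrderAt_eq_natCast (n := 0)).mp hm
    have := hev.self_of_nhds
    simp [ha0, eq_comm] at this
    exact hg0 this
  · exact h1

private lemma blaschke_aux (n : ℕ) : ∀ (R : ℝ), 1 < R → ∀ (H : ℂ → ℂ),
    DifferentiableOn ℂ H (Metric.ball 0 R) →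
    (∀ z : ℂ, ‖z‖ = 1 → ‖H z‖ = 1) →
    ∀ S : Finset ℂ, (∀ z ∈ S, ‖z‖ < 1) →
    (∀ z ∈ Metric.closedBall (0:ℂ) 1, H z = 0 → z ∈ S) →
    (∑ z ∈ S, ordnat H z) ≤ n →
    ∃ (m : ℕ) (zk : Fin m → ℂ) (C : ℂ),
      (∀ k, ‖zk k‖ < 1) ∧ ‖C‖ = 1 ∧
      ∀ z ∈ Metric.closedBall (0 : ℂ) 1,
        H z = C * ∏ k, (z - zk k) / ((starRingEnd ℂ) (zk k) * z - 1) := by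
  induction n with
  | zero =>
    intro R hR H hH hmod S hS hcover hsum
    have hnz : ∀ z ∈ Metric.closedBall (0:ℂ) 1, H z ≠ 0 := by
      intro z hz h0
      have hzS := hcover z hz h0
      have hz1 : ‖z‖ < 1 := hS z hzS
      have hzR : z ∈ Metric.ball (0:ℂ) R := by
        simp only [Metric.mem_ball, dist_zero_right]; linarith
      obtain ⟨hA, m, hm⟩ := order_exists hR hH hmod hzR
      have h1m : 1 ≤ m := order_pos_of_zero hA h0 hm
      have : ordnat H z = 0 :=
        Finset.sum_eq_zero_iff.mp (Nat.le_zero.mp hsum) z hzS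
      rw [ordnat_eq hA, hm, ENat.toNat_coe] at this
      omega
    obtain ⟨C, hC, hCeq⟩ := blaschke_const hR hH hmod hnz
    exact ⟨0, Fin.elim0, C, fun k => k.elim0, hC, fun z hz => by simp [hCeq z hz]⟩
  | succ n ih =>
    intro R hR H hH hmod S hS hcover hsum
    by_cases hzero : ∃ a ∈ Metric.closedBall (0:ℂ) 1, H a = 0
    · obtain ⟨a, haD, ha0⟩ := hzero
      have haS : a ∈ S := hcover a haD ha0
      have ha1 : ‖a‖ < 1 := hS a haS
      obtain ⟨H1, hH1, hformula, hb⟩ := blaschke_step hR hH ha1 ha0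
      have hmod1 : ∀ z : ℂ, ‖z‖ = 1 → ‖H1 z‖ = 1 := by
        intro z hz; rw [hb z hz]; exact hmod z hz
      have hcover1 : ∀ z ∈ Metric.closedBall (0:ℂ) 1, H1 z = 0 → z ∈ S := by
        intro z hz h0
        exact hcover z hz (by rw [hformula z hz, h0, zero_mul])
      -- membership facts
      have hball : ∀ w : ℂ, ‖w‖ < 1 → w ∈ Metric.ball (0:ℂ) R := by
        intro w hw
        simp only [Metric.mem_ball, dist_zero_right]; linarith
      have hev : ∀ w : ℂ, ‖w‖ < 1 →
          ∀ᶠ x in nhds w, H x = H1 x * ((x - a) / ((starRingEnd ℂ) a * x - 1)) := by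
        intro w hw
        have : Metric.closedBall (0:ℂ) 1 ∈ nhds w :=
          Metric.closedBall_mem_nhds_of_mem
            (by simp only [Metric.mem_ball, dist_zero_right]; exact hw)
        exact Filter.eventually_of_mem this (fun x hx => hformula x hx)
      -- order at points ≠ a
      have key : ∀ z : ℂ, ‖z‖ < 1 → z ≠ a → ordnat H1 z = ordnat H z := by
        intro z hz hzne
        have hzR := hball z hz
        have hA1 : AnalyticAt ℂ H1 z := (hH1.analyticOnNhd Metric.isOpen_ball) z hzR
        obtain ⟨hA1', n1, hn1⟩ := order_exists hR hH1 hmod1 hzR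
        have hden : (starRingEnd ℂ) a * z - 1 ≠ 0 := denom_ne_zero ha1 hz.le
        have hBan : AnalyticAt ℂ (fun w => (w - a) / ((starRingEnd ℂ) a * w - 1)) z :=
          ((analyticAt_id).sub analyticAt_const).div
            ((analyticAt_const.mul analyticAt_id).sub analyticAt_const) hden
        have hB0 : (z - a) / ((starRingEnd ℂ) a * z - 1) ≠ 0 :=
          div_ne_zero (sub_ne_zero.mpr hzne) hden
        obtain ⟨hfA, hford⟩ := order_unit_mul hA1' hBan hB0 (hev z hz) hn1
        rw [ordnat_eq hA1', ordnat_eq hfA, hn1, hford]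
      -- order at a
      have keya : ordnat H1 a + 1 = ordnat H a := by
        have haR := hball a ha1
        obtain ⟨hA1', n1, hn1⟩ := order_exists hR hH1 hmod1 haR
        obtain ⟨hg2, hg2ord⟩ := order_mul_sub hA1' hn1
        have hden : (starRingEnd ℂ) a * a - 1 ≠ 0 := denom_ne_zero ha1 ha1.le
        have hu : AnalyticAt ℂ (fun w => ((starRingEnd ℂ) a * w - 1)⁻¹) a :=
          (((analyticAt_const.mul analyticAt_id).sub analyticAt_const).inv hden)
        have hu0 : ((starRingEnd ℂ) a * a - 1)⁻¹ ≠ 0 := inv_ne_zero hden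
        have hevm : ∀ᶠ w in nhds a,
            H w = (H1 w * (w - a)) * ((starRingEnd ℂ) a * w - 1)⁻¹ := by
          filter_upwards [hev a ha1] with w hw
          rw [hw, div_eq_mul_inv]; ring
        obtain ⟨hfA, hford⟩ := order_unit_mul hg2 hu hu0 hevm hg2ord
        rw [ordnat_eq hA1', ordnat_eq hfA, hn1, hford]
        norm_cast
      -- sum decreases
      have hsum1 : ∑ z ∈ S, ordnat H1 z ≤ n := by
        have e1 : ∑ z ∈ S.erase a, ordnat H1 z = ∑ z ∈ S.erase a, ordnat H z :=
          Finset.sum_congr rfl (fun z hz =>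
            key z (hS z (Finset.mem_of_mem_erase hz)) (Finset.ne_of_mem_erase hz))
        have e2 := Finset.add_sum_erase S (ordnat H1) haS
        have e3 := Finset.add_sum_erase S (ordnat H) haS
        omega
      obtain ⟨m, zk, C, h1, h2, h3⟩ := ih R hR H1 hH1 hmod1 S hS hcover1 hsum1
      refine ⟨m + 1, Fin.cons a zk, C, ?_, h2, ?_⟩
      · intro k
        refine Fin.cases ?_ ?_ k
        · simpa using ha1
        · intro i; simpa using h1 i
      · intro z hz
        rw [hformula z hz, h3 z hz, Fin.prod_univ_succ]
        simp only [Fin.cons_zero, Fin.cons_succ]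
        ring
    · push_neg at hzero
      obtain ⟨C, hC, hCeq⟩ := blaschke_const hR hH hmod hzero
      exact ⟨0, Fin.elim0, C, fun k => k.elim0, hC, fun z hz => by simp [hCeq z hz]⟩
open Real

/-- A function holomorphic on a neighborhood of the closed unit disk with
unimodular boundary values is a finite Blaschke product (up to a unimodular
constant). -/
theorem blaschke_product_representation
    (H : ℂ → ℂ) (V : Set ℂ) (hV : IsOpen V)
    (hDV : Metric.closedBall (0 : ℂ) 1 ⊆ V)
    (hH : DifferentiableOn ℂ H V)
    (hmod : ∀ z : ℂ, ‖z‖ = 1 → ‖H z‖ = 1) :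
    ∃ (m : ℕ) (zk : Fin m → ℂ) (C : ℂ),
      (∀ k, ‖zk k‖ < 1) ∧ ‖C‖ = 1 ∧
      ∀ z ∈ Metric.closedBall (0 : ℂ) 1,
        H z = C * ∏ k, (z - zk k) / ((starRingEnd ℂ) (zk k) * z - 1) := by
  obtain ⟨δ, hδ, hsub⟩ :=
    (isCompact_closedBall (0:ℂ) 1).exists_thickening_subset_open hV hDV
  rw [thickening_closedBall hδ zero_le_one] at hsub
  set R : ℝ := δ + 1 with hRdef
  have hR : 1 < R := by simp [hRdef]; linarith
  have hH' : DifferentiableOn ℂ H (Metric.ball 0 R) := hH.mono hsub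
  have hcbsub : Metric.closedBall (0:ℂ) 1 ⊆ Metric.ball (0:ℂ) R :=
    Metric.closedBall_subset_ball hR
  -- the zero set is finite
  set Z : Set ℂ := Metric.closedBall (0:ℂ) 1 ∩ H ⁻¹' {0} with hZdef
  have hZfin : Z.Finite := by
    by_contra hinf
    have hZsub : Z ⊆ Metric.closedBall (0:ℂ) 1 := Set.inter_subset_left
    obtain ⟨x, hxK, hacc⟩ := (show Z.Infinite from hinf).exists_accPt_of_subset_isCompact
      (isCompact_closedBall (0:ℂ) 1) hZsub
    have hxR : x ∈ Metric.ball (0:ℂ) R := hcbsub hxK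
    have hA : AnalyticAt ℂ H x := (hH'.analyticOnNhd Metric.isOpen_ball) x hxR
    have hfreq : ∃ᶠ w in nhdsWithin x {x}ᶜ, H w = 0 := by
      have h1 := (accPt_iff_frequently (x := x) (C := Z)).mp hacc
      rw [frequently_nhdsWithin_iff]
      refine h1.mono (fun w hw => ⟨?_, hw.1⟩)
      have := hw.2.2
      simpa using this
    exact not_locally_zero hR hH' hmod hxR
      (hA.frequently_zero_iff_eventually_zero.mp hfreq)
  set S : Finset ℂ := hZfin.toFinset with hSdef
  have hSmem : ∀ z, z ∈ S ↔ z ∈ Z := fun z => hZfin.mem_toFinset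
  have hS : ∀ z ∈ S, ‖z‖ < 1 := by
    intro z hz
    obtain ⟨hz1, hz0⟩ := (hSmem z).mp hz
    have hle : ‖z‖ ≤ 1 := by
      simpa [Metric.mem_closedBall, Complex.dist_eq] using hz1
    rcases lt_or_eq_of_le hle with h | h
    · exact h
    · exfalso
      have := hmod z h
      simp only [Set.mem_preimage, Set.mem_singleton_iff] at hz0
      rw [hz0] at this
      simp at this
  have hcover : ∀ z ∈ Metric.closedBall (0:ℂ) 1, H z = 0 → z ∈ S := by
    intro z hz h0
    exact (hSmem z).mpr ⟨hz, by simp [h0]⟩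
  exact blaschke_aux (∑ z ∈ S, ordnat H z) R hR H hH' hmod S hS hcover le_rfl
end

section
/- Let α₁, …, αₙ be finitely many points of the unit circle and let U : ℂ → ℂ be holomorphic on the open unit disk D, continuous on (closure of D) \ {α₁, …, αₙ}, with Re U(z) = 0 for every z on the unit circle with z ∉ {α₁, …, αₙ}. Define V(z) := U(z) for |z| ≤ 1 and V(z) := −conj(U(1/conj(z))) for |z| > 1. Then V is complex differentiable (holomorphic) at every point of ℂ \ {α₁, …, αₙ}. -/
open Real Complex Set intervalIntegral MeasureTheory

/-- Morera-type removability across the real line, on a square centered at `0`. -/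
lemma morera_off_real_line {f : ℂ → ℂ} {r : ℝ} (hr : 0 < r)
    (hc : ContinuousOn f (Ioo (-r) r ×ℂ Ioo (-r) r))
    (hd : ∀ z : ℂ, z ∈ Ioo (-r) r ×ℂ Ioo (-r) r → z.im ≠ 0 → DifferentiableAt ℂ f z) :
    DifferentiableAt ℂ f 0 := by
  set Q : Set ℂ := Ioo (-r) r ×ℂ Ioo (-r) r with hQdef
  have hQ : IsOpen Q := isOpen_Ioo.reProdIm isOpen_Ioo
  have h0r : (0 : ℝ) ∈ Ioo (-r) r := by constructor <;> linarith
  have h0Q : (0 : ℂ) ∈ Q := by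
    simp [hQdef, Complex.mem_reProdIm, h0r]
  have hmem : ∀ x y : ℝ, x ∈ Ioo (-r) r → y ∈ Ioo (-r) r → (x + y * Complex.I : ℂ) ∈ Q := by
    intro x y hx hy
    rw [hQdef, Complex.mem_reProdIm]
    constructor <;> simp [hx, hy]
  -- integrability of f on horizontal / vertical segments inside Q
  have hseg : ∀ y ∈ Ioo (-r) r, ∀ a ∈ Ioo (-r) r, ∀ b ∈ Ioo (-r) r,
      IntervalIntegrable (fun x : ℝ => f (x + y * Complex.I)) volume a b := by
    intro y hy a ha b hb
    apply ContinuousOn.intervalIntegrable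
    apply hc.comp ((Complex.continuous_ofReal.add continuous_const).continuousOn)
    intro x hx
    have hx' : x ∈ Ioo (-r) r := Set.ordConnected_Ioo.uIcc_subset ha hb hx
    exact hmem x y hx' hy
  have hseg' : ∀ x ∈ Ioo (-r) r, ∀ a ∈ Ioo (-r) r, ∀ b ∈ Ioo (-r) r,
      IntervalIntegrable (fun y : ℝ => f (x + y * Complex.I)) volume a b := by
    intro x hx a ha b hb
    apply ContinuousOn.intervalIntegrable
    apply hc.comp (by fun_prop)
    intro y hy
    have hy' : y ∈ Ioo (-r) r := Set.ordConnected_Ioo.uIcc_subset ha hb hy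
    exact hmem x y hx hy'
  -- Cauchy-Goursat on rectangles with one edge on the real line
  have rect : ∀ a ∈ Ioo (-r) r, ∀ b ∈ Ioo (-r) r, ∀ d ∈ Ioo (-r) r,
      (∫ x : ℝ in a..b, f x) =
        (∫ x : ℝ in a..b, f (x + d * Complex.I))
          - Complex.I * (∫ y : ℝ in (0:ℝ)..d, f (b + y * Complex.I))
          + Complex.I * (∫ y : ℝ in (0:ℝ)..d, f (a + y * Complex.I)) := by
    intro a ha b hb d hdI
    have key := Complex.integral_boundary_rect_eq_zero_of_continuousOn_of_differentiableOn f
      (a : ℂ) ((b : ℂ) + (d : ℂ) * Complex.I) ?_ ?_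
    · have hre1 : ((b : ℂ) + (d : ℂ) * Complex.I).re = b := by simp
      have him1 : ((b : ℂ) + (d : ℂ) * Complex.I).im = d := by simp
      rw [Complex.ofReal_re, Complex.ofReal_im, hre1, him1] at key
      have h0 : ∀ x : ℝ, (x : ℂ) + (0 : ℝ) * Complex.I = (x : ℂ) := by intro x; simp
      simp only [h0, smul_eq_mul] at key
      linear_combination key
    · have hre1 : ((b : ℂ) + (d : ℂ) * Complex.I).re = b := by simp
      have him1 : ((b : ℂ) + (d : ℂ) * Complex.I).im = d := by simp
      rw [Complex.ofReal_re, Complex.ofReal_im, hre1, him1]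
      intro z hz
      apply hc.continuousWithinAt ?_ |>.mono ?_
      · exact ⟨Set.ordConnected_Ioo.uIcc_subset ha hb hz.1,
          Set.ordConnected_Ioo.uIcc_subset h0r hdI hz.2⟩
      · intro w hw
        exact ⟨Set.ordConnected_Ioo.uIcc_subset ha hb hw.1,
          Set.ordConnected_Ioo.uIcc_subset h0r hdI hw.2⟩
    · have hre1 : ((b : ℂ) + (d : ℂ) * Complex.I).re = b := by simp
      have him1 : ((b : ℂ) + (d : ℂ) * Complex.I).im = d := by simp
      rw [Complex.ofReal_re, Complex.ofReal_im, hre1, him1]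
      intro z hz
      have hz1 : z.re ∈ Ioo (-r) r :=
        ⟨lt_trans (lt_min ha.1 hb.1) hz.1.1, lt_trans hz.1.2 (max_lt ha.2 hb.2)⟩
      have hz2 : z.im ∈ Ioo (-r) r :=
        ⟨lt_trans (lt_min h0r.1 hdI.1) hz.2.1, lt_trans hz.2.2 (max_lt h0r.2 hdI.2)⟩
      have hzim : z.im ≠ 0 := by
        intro h
        have h1 : min (0:ℝ) d < 0 := h ▸ hz.2.1
        have h2 : (0:ℝ) < max 0 d := h ▸ hz.2.2
        rcases le_total d 0 with h' | h'
        · rw [max_eq_left (by linarith : d ≤ (0:ℝ))] at h2; exact lt_irrefl _ h2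
        · rw [min_eq_left h'] at h1; exact lt_irrefl _ h1
      exact (hd _ (by rw [hQdef, Complex.mem_reProdIm]; exact ⟨hz1, hz2⟩) hzim).differentiableWithinAt
  -- the primitive
  set F : ℂ → ℂ := fun z => (∫ x : ℝ in (0:ℝ)..z.re, f x)
      + Complex.I * ∫ y : ℝ in (0:ℝ)..z.im, f (z.re + y * Complex.I) with hFdef
  have hQmem : ∀ z ∈ Q, z.re ∈ Ioo (-r) r ∧ z.im ∈ Ioo (-r) r := by
    intro z hz
    rw [hQdef, Complex.mem_reProdIm] at hz
    exact hz
  -- path independence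
  have star : ∀ z ∈ Q, ∀ w ∈ Q, F w - F z =
      (∫ x : ℝ in z.re..w.re, f (x + z.im * Complex.I))
        + Complex.I * ∫ y : ℝ in z.im..w.im, f (w.re + y * Complex.I) := by
    intro z hz w hw
    obtain ⟨hz1, hz2⟩ := hQmem z hz
    obtain ⟨hw1, hw2⟩ := hQmem w hw
    have e1 : (∫ x : ℝ in (0:ℝ)..w.re, f x) - (∫ x : ℝ in (0:ℝ)..z.re, f x)
        = ∫ x : ℝ in z.re..w.re, f x := by
      have h1 := hseg 0 h0r 0 h0r w.re hw1
      have h2 := hseg 0 h0r 0 h0r z.re hz1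
      simp only [Complex.ofReal_zero, zero_mul, add_zero] at h1 h2
      exact integral_interval_sub_left h1 h2
    have e2 : (∫ y : ℝ in (0:ℝ)..w.im, f (w.re + y * Complex.I))
        - (∫ y : ℝ in (0:ℝ)..z.im, f (w.re + y * Complex.I))
        = ∫ y : ℝ in z.im..w.im, f (w.re + y * Complex.I) :=
      integral_interval_sub_left (hseg' w.re hw1 0 h0r w.im hw2)
        (hseg' w.re hw1 0 h0r z.im hz2)
    have e3 := rect z.re hz1 w.re hw1 z.im hz2
    rw [hFdef]
    simp only
    linear_combination e1 + Complex.I * e2 + e3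
  -- F is differentiable with derivative f
  have key : ∀ z ∈ Q, HasDerivAt F (f z) z := by
    intro z hz
    obtain ⟨hz1, hz2⟩ := hQmem z hz
    rw [hasDerivAt_iff_isLittleO, Asymptotics.isLittleO_iff]
    intro c hc0
    have hfc : ContinuousAt f z := hc.continuousAt (hQ.mem_nhds hz)
    obtain ⟨δ, hδ0, hδ⟩ := Metric.continuousAt_iff.mp hfc (c/2) (by positivity)
    have hball : Metric.ball z (δ/2) ∈ nhds z := Metric.ball_mem_nhds z (by positivity)
    filter_upwards [hball, hQ.mem_nhds hz] with w hwb hwQ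
    obtain ⟨hw1, hw2⟩ := hQmem w hwQ
    have hwz : dist w z < δ/2 := Metric.mem_ball.mp hwb
    -- pointwise bounds on the two segments
    have hbound1 : ∀ x ∈ Set.uIoc z.re w.re,
        ‖f (x + z.im * Complex.I) - f z‖ ≤ c/2 := by
      intro x hx
      have hx' : x ∈ uIcc z.re w.re := Set.uIoc_subset_uIcc hx
      have hxd : dist (↑x + z.im * Complex.I : ℂ) z < δ := by
        have h1 : (↑x + z.im * Complex.I : ℂ) - z = ((x - z.re : ℝ) : ℂ) := by
          have := Complex.re_add_im z
          push_cast
          linear_combination this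
        rw [dist_eq_norm, h1]
        rw [Complex.norm_real]
        have h2 : |x - z.re| ≤ |w.re - z.re| := by
          rcases le_total z.re w.re with h | h
          · rw [Set.uIcc_of_le h] at hx'
            rw [_root_.abs_of_nonneg (by linarith [hx'.1]), _root_.abs_of_nonneg (by linarith)]
            linarith [hx'.2]
          · rw [Set.uIcc_of_ge h] at hx'
            rw [_root_.abs_of_nonpos (by linarith [hx'.2]), _root_.abs_of_nonpos (by linarith)]
            linarith [hx'.1]
        have h3 : |w.re - z.re| ≤ ‖w - z‖ := by
          have := Complex.abs_re_le_norm (w - z)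
          simpa using this
        have h4 : ‖w - z‖ < δ/2 := by
          rw [dist_eq_norm] at hwz; simpa using hwz
        calc |x - z.re| ≤ ‖w - z‖ := le_trans h2 h3
          _ < δ/2 := h4
          _ ≤ δ := by linarith
      have := hδ hxd
      rw [dist_eq_norm] at this
      exact le_of_lt this
    have hbound2 : ∀ y ∈ Set.uIoc z.im w.im,
        ‖f (w.re + y * Complex.I) - f z‖ ≤ c/2 := by
      intro y hy
      have hy' : y ∈ uIcc z.im w.im := Set.uIoc_subset_uIcc hy
      have hyd : dist (↑w.re + y * Complex.I : ℂ) z < δ := by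
        have h1 : (↑w.re + y * Complex.I : ℂ) - z
            = ((w.re - z.re : ℝ) : ℂ) + ((y - z.im : ℝ) : ℂ) * Complex.I := by
          have := Complex.re_add_im z
          push_cast
          linear_combination this
        rw [dist_eq_norm, h1]
        have h2 : ‖((w.re - z.re : ℝ) : ℂ) + ((y - z.im : ℝ) : ℂ) * Complex.I‖
            ≤ |w.re - z.re| + |y - z.im| := by
          calc ‖((w.re - z.re : ℝ) : ℂ) + ((y - z.im : ℝ) : ℂ) * Complex.I‖
              ≤ ‖((w.re - z.re : ℝ) : ℂ)‖ + ‖((y - z.im : ℝ) : ℂ) * Complex.I‖ :=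
                norm_add_le _ _
            _ = |w.re - z.re| + |y - z.im| := by
                rw [norm_mul, Complex.norm_real, Complex.norm_real]; simp
        have h3 : |y - z.im| ≤ |w.im - z.im| := by
          rcases le_total z.im w.im with h | h
          · rw [Set.uIcc_of_le h] at hy'
            rw [_root_.abs_of_nonneg (by linarith [hy'.1]), _root_.abs_of_nonneg (by linarith)]
            linarith [hy'.2]
          · rw [Set.uIcc_of_ge h] at hy'
            rw [_root_.abs_of_nonpos (by linarith [hy'.2]), _root_.abs_of_nonpos (by linarith)]
            linarith [hy'.1]
        have h4 : |w.re - z.re| ≤ ‖w-z‖ := by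
          simpa using Complex.abs_re_le_norm (w - z)
        have h5 : |w.im - z.im| ≤ ‖w-z‖ := by
          simpa using Complex.abs_im_le_norm (w - z)
        have h6 : ‖w - z‖ < δ/2 := by
          rw [dist_eq_norm] at hwz; simpa using hwz
        calc ‖_ + _‖ ≤ |w.re - z.re| + |y - z.im| := h2
          _ ≤ ‖w-z‖ + ‖w-z‖ := by
              have := le_trans h3 h5; linarith
          _ < δ := by linarith
      have := hδ hyd
      rw [dist_eq_norm] at this
      exact le_of_lt this
    -- rewrite the difference
    have hI1 : IntervalIntegrable (fun x : ℝ => f (x + z.im * Complex.I)) volume z.re w.re :=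
      hseg z.im hz2 z.re hz1 w.re hw1
    have hI2 : IntervalIntegrable (fun y : ℝ => f (w.re + y * Complex.I)) volume z.im w.im :=
      hseg' w.re hw1 z.im hz2 w.im hw2
    have hsplit : F w - F z - (w - z) • f z =
        (∫ x : ℝ in z.re..w.re, (f (x + z.im * Complex.I) - f z))
          + Complex.I * ∫ y : ℝ in z.im..w.im, (f (w.re + y * Complex.I) - f z) := by
      rw [intervalIntegral.integral_sub hI1 intervalIntegrable_const,
        intervalIntegral.integral_sub hI2 intervalIntegrable_const,
        intervalIntegral.integral_const, intervalIntegral.integral_const,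
        star z hz w hwQ]
      have hwzd : w - z = ((w.re - z.re : ℝ) : ℂ) + ((w.im - z.im : ℝ) : ℂ) * Complex.I := by
        apply Complex.ext <;> simp
      rw [hwzd]
      simp only [smul_eq_mul, Complex.real_smul]
      ring
    rw [hsplit]
    have hb1 : ‖∫ x : ℝ in z.re..w.re, (f (x + z.im * Complex.I) - f z)‖
        ≤ c/2 * |w.re - z.re| := intervalIntegral.norm_integral_le_of_norm_le_const hbound1
    have hb2 : ‖∫ y : ℝ in z.im..w.im, (f (w.re + y * Complex.I) - f z)‖
        ≤ c/2 * |w.im - z.im| := intervalIntegral.norm_integral_le_of_norm_le_const hbound2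
    have h4 : |w.re - z.re| ≤ ‖w - z‖ := by
      simpa using Complex.abs_re_le_norm (w - z)
    have h5 : |w.im - z.im| ≤ ‖w - z‖ := by
      simpa using Complex.abs_im_le_norm (w - z)
    calc ‖_ + Complex.I * _‖
        ≤ ‖(∫ x : ℝ in z.re..w.re, (f (x + z.im * Complex.I) - f z))‖
          + ‖Complex.I * ∫ y : ℝ in z.im..w.im, (f (w.re + y * Complex.I) - f z)‖ :=
          norm_add_le _ _
      _ = ‖(∫ x : ℝ in z.re..w.re, (f (x + z.im * Complex.I) - f z))‖
          + ‖∫ y : ℝ in z.im..w.im, (f (w.re + y * Complex.I) - f z)‖ := by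
          rw [norm_mul, Complex.norm_I, one_mul]
      _ ≤ c/2 * |w.re - z.re| + c/2 * |w.im - z.im| := add_le_add hb1 hb2
      _ ≤ c/2 * ‖w - z‖ + c/2 * ‖w - z‖ := by
          have hc2 : (0:ℝ) ≤ c/2 := by positivity
          exact add_le_add (mul_le_mul_of_nonneg_left h4 hc2)
            (mul_le_mul_of_nonneg_left h5 hc2)
      _ = c * ‖w - z‖ := by ring
  -- conclude
  have hFd : DifferentiableOn ℂ F Q := fun z hz =>
    (key z hz).differentiableAt.differentiableWithinAt
  have hFa : AnalyticOnNhd ℂ F Q := (Complex.analyticOnNhd_iff_differentiableOn hQ).mpr hFd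
  have hda : DifferentiableAt ℂ (deriv F) 0 := ((hFa.deriv) 0 h0Q).differentiableAt
  apply hda.congr_of_eventuallyEq
  exact Filter.eventuallyEq_of_mem (hQ.mem_nhds h0Q) (fun z hz => ((key z hz).deriv).symm)


lemma hasDerivAt_conj_conj {U : ℂ → ℂ} {w d : ℂ} (h : HasDerivAt U d w) :
    HasDerivAt (fun z => (starRingEnd ℂ) (U ((starRingEnd ℂ) z)))
      ((starRingEnd ℂ) d) ((starRingEnd ℂ) w) := by
  rw [hasDerivAt_iff_isLittleO] at h ⊢
  have t : Filter.Tendsto (fun y : ℂ => (starRingEnd ℂ) y)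
      (nhds ((starRingEnd ℂ) w)) (nhds w) := by
    have := (Complex.continuous_conj.tendsto ((starRingEnd ℂ) w))
    simpa using this
  have h2 := h.comp_tendsto t
  rw [Asymptotics.isLittleO_iff]
  intro c hc
  filter_upwards [Asymptotics.isLittleO_iff.mp h2 hc] with y hy
  simp only [Function.comp_apply, smul_eq_mul] at hy ⊢
  have e1 : (starRingEnd ℂ) (U ((starRingEnd ℂ) ((starRingEnd ℂ) w))) = (starRingEnd ℂ) (U w) := by
    rw [Complex.conj_conj]
  rw [e1]
  have e2 : (starRingEnd ℂ) (U ((starRingEnd ℂ) y)) - (starRingEnd ℂ) (U w)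
      - (y - (starRingEnd ℂ) w) * (starRingEnd ℂ) d
      = (starRingEnd ℂ) (U ((starRingEnd ℂ) y) - U w - ((starRingEnd ℂ) y - w) * d) := by
    simp only [map_sub, map_mul, Complex.conj_conj]
  have e3 : ‖y - (starRingEnd ℂ) w‖ = ‖(starRingEnd ℂ) y - w‖ := by
    rw [show (starRingEnd ℂ) y - w = (starRingEnd ℂ) (y - (starRingEnd ℂ) w) by
      simp only [map_sub, Complex.conj_conj], RCLike.norm_conj]
  rw [e2, RCLike.norm_conj, e3]
  exact hy

lemma differentiableAt_conj_conj {U : ℂ → ℂ} {w : ℂ} (h : DifferentiableAt ℂ U w) :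
    DifferentiableAt ℂ (fun z => (starRingEnd ℂ) (U ((starRingEnd ℂ) z))) ((starRingEnd ℂ) w) :=
  (hasDerivAt_conj_conj h.hasDerivAt).differentiableAt


open Real

/-- Schwarz reflection: if `U` is holomorphic on the unit disk, continuous up
to the boundary away from finitely many points `α₁, …, αₙ` of the unit
circle, with `Re U = 0` on the circle away from these points, then the
extension `V` of `U` by `V(z) = -conj (U (1/conj z))` outside the closed disk
is holomorphic on `ℂ \ {α₁, …, αₙ}`. -/
theorem schwarz_reflection_extension
    (n : ℕ) (α : Fin n → ℂ) (hα : ∀ k, ‖α k‖ = 1)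
    (U : ℂ → ℂ)
    (hholo : DifferentiableOn ℂ U (Metric.ball (0 : ℂ) 1))
    (hcont : ContinuousOn U (Metric.closedBall (0 : ℂ) 1 \ Set.range α))
    (hre : ∀ z : ℂ, ‖z‖ = 1 → z ∉ Set.range α → (U z).re = 0)
    (V : ℂ → ℂ)
    (hV : ∀ z : ℂ, V z = if ‖z‖ ≤ 1 then U z
      else -(starRingEnd ℂ) (U (1 / (starRingEnd ℂ) z))) :
    ∀ z : ℂ, z ∉ Set.range α → DifferentiableAt ℂ V z := by
  set S : Set ℂ := Set.range α with hSdef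
  have hSclosed : IsClosed S := (Set.finite_range α).isClosed
  -- differentiability strictly inside the disk
  have hin : ∀ z : ℂ, ‖z‖ < 1 → DifferentiableAt ℂ V z := by
    intro z hz
    have hU : DifferentiableAt ℂ U z := hholo.differentiableAt
      (Metric.isOpen_ball.mem_nhds (by
        rw [Metric.mem_ball, Complex.dist_eq, sub_zero]; exact hz))
    apply hU.congr_of_eventuallyEq
    have hmem : {w : ℂ | ‖w‖ < 1} ∈ nhds z :=
      (isOpen_lt continuous_norm continuous_const).mem_nhds hz
    filter_upwards [hmem] with w hw
    rw [hV w, if_pos (le_of_lt hw)]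
  -- differentiability strictly outside the disk
  have hout : ∀ z : ℂ, 1 < ‖z‖ → DifferentiableAt ℂ V z := by
    intro z hz
    have hzne : z ≠ 0 := by
      intro h; rw [h] at hz; simp at hz; linarith
    have habspos : 0 < ‖z‖ := by positivity
    have hwlt : ‖(starRingEnd ℂ) (z⁻¹)‖ < 1 := by
      rw [Complex.norm_conj, norm_inv]
      rw [inv_lt_one_iff₀]
      right; exact hz
    have hU : DifferentiableAt ℂ U ((starRingEnd ℂ) (z⁻¹)) := hholo.differentiableAt
      (Metric.isOpen_ball.mem_nhds (by
        rw [Metric.mem_ball, Complex.dist_eq, sub_zero]; exact hwlt))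
    have hg : DifferentiableAt ℂ (fun y => (starRingEnd ℂ) (U ((starRingEnd ℂ) y)))
        ((starRingEnd ℂ) ((starRingEnd ℂ) (z⁻¹))) := differentiableAt_conj_conj hU
    rw [Complex.conj_conj] at hg
    have hinv : DifferentiableAt ℂ (fun w : ℂ => w⁻¹) z := differentiableAt_inv hzne
    have hcomp : DifferentiableAt ℂ
        (fun w : ℂ => (starRingEnd ℂ) (U ((starRingEnd ℂ) (w⁻¹)))) z := hg.comp z hinv
    apply hcomp.neg.congr_of_eventuallyEq
    have hmem : {w : ℂ | 1 < ‖w‖} ∈ nhds z :=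
      (isOpen_lt continuous_const continuous_norm).mem_nhds hz
    filter_upwards [hmem] with w hw
    rw [hV w, if_neg (not_le.mpr hw)]
    rw [one_div, ← map_inv₀]
    rfl
  have hVd : ∀ z : ℂ, ‖z‖ ≠ 1 → DifferentiableAt ℂ V z := by
    intro z h
    rcases lt_or_gt_of_ne h with h' | h'
    · exact hin z h'
    · exact hout z h'
  -- on the circle away from S, both formulas agree
  have hconj_inv : ∀ z : ℂ, ‖z‖ = 1 → 1 / (starRingEnd ℂ) z = z := by
    intro z h1
    have hmc : z * (starRingEnd ℂ) z = 1 := by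
      rw [Complex.mul_conj]
      rw [Complex.normSq_eq_norm_sq, h1]
      norm_num
    rw [one_div]
    exact inv_eq_of_mul_eq_one_left hmc
  have key_eq : ∀ z : ℂ, ‖z‖ = 1 → z ∉ S →
      V z = -(starRingEnd ℂ) (U (1 / (starRingEnd ℂ) z)) := by
    intro z h1 hzS
    rw [hV z, if_pos h1.le, hconj_inv z h1]
    have hre0 := hre z h1 hzS
    apply Complex.ext
    · simp [hre0]
    · simp
  -- continuity at circle points away from S
  have hcirc_cont : ∀ z : ℂ, ‖z‖ = 1 → z ∉ S → ContinuousAt V z := by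
    intro z h1 hzS
    have hzne : z ≠ 0 := by
      intro h; rw [h] at h1; simp at h1
    set A : Set ℂ := {w : ℂ | ‖w‖ ≤ 1} with hAdef
    set B : Set ℂ := {w : ℂ | 1 ≤ ‖w‖} with hBdef
    have hAB : A ∪ B = Set.univ := by
      apply Set.eq_univ_of_forall
      intro w
      rcases le_total (‖w‖) 1 with h | h
      · exact Or.inl h
      · exact Or.inr h
    have hzcb : z ∈ Metric.closedBall (0:ℂ) 1 \ S := by
      constructor
      · rw [Metric.mem_closedBall, Complex.dist_eq, sub_zero]; exact h1.le
      · exact hzS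
    have hA : ContinuousWithinAt V A z := by
      have hUc : ContinuousWithinAt U (Metric.closedBall (0:ℂ) 1 \ S) z :=
        hcont.continuousWithinAt hzcb
      have hUc2 : ContinuousWithinAt U A z := by
        apply hUc.mono_of_mem_nhdsWithin
        have hSc : Sᶜ ∈ nhds z := hSclosed.isOpen_compl.mem_nhds hzS
        have hsub : A ∩ Sᶜ ⊆ Metric.closedBall (0:ℂ) 1 \ S := by
          intro w hw
          exact ⟨by rw [Metric.mem_closedBall, Complex.dist_eq, sub_zero]; exact hw.1, hw.2⟩
        exact Filter.mem_of_superset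
          (Filter.inter_mem self_mem_nhdsWithin (mem_nhdsWithin_of_mem_nhds hSc)) hsub
      apply hUc2.congr
      · intro w hw
        rw [hV w]
        exact if_pos hw
      · rw [hV z, if_pos h1.le]
    have hB : ContinuousWithinAt V B z := by
      set m : ℂ → ℂ := fun w => 1 / (starRingEnd ℂ) w with hmdef
      set T : Set ℂ := ({w : ℂ | w ≠ 0} ∩ m ⁻¹' Sᶜ) ∩ Sᶜ with hTdef
      have hmz : m z = z := hconj_inv z h1
      have hmcontOn : ContinuousOn m {w : ℂ | w ≠ 0} := by
        apply ContinuousOn.div continuousOn_const Complex.continuous_conj.continuousOn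
        intro w hw
        simpa using hw
      have hTopen : IsOpen T := by
        apply IsOpen.inter ?_ hSclosed.isOpen_compl
        exact hmcontOn.isOpen_inter_preimage isOpen_ne hSclosed.isOpen_compl
      have hzT : z ∈ T := by
        refine ⟨⟨hzne, ?_⟩, hzS⟩
        simp only [Set.mem_preimage, Set.mem_compl_iff]
        rw [hmz]; exact hzS
      have hTnhds : T ∈ nhds z := hTopen.mem_nhds hzT
      rw [← continuousWithinAt_inter hTnhds]
      have hmc : ContinuousWithinAt m (B ∩ T) z :=
        (hmcontOn.continuousAt (isOpen_ne.mem_nhds hzne)).continuousWithinAt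
      have hmaps : Set.MapsTo m (B ∩ T) (Metric.closedBall (0:ℂ) 1 \ S) := by
        intro w hw
        obtain ⟨hwB, ⟨hwne, hwpre⟩, _⟩ := hw
        constructor
        · rw [Metric.mem_closedBall, Complex.dist_eq, sub_zero]
          rw [hmdef]
          simp only [norm_div, norm_one, Complex.norm_conj]
          rw [div_le_one (lt_of_lt_of_le one_pos hwB)]
          exact hwB
        · exact hwpre
      have hUc : ContinuousWithinAt U (Metric.closedBall (0:ℂ) 1 \ S) (m z) := by
        rw [hmz]; exact hcont.continuousWithinAt hzcb
      have hUm : ContinuousWithinAt (fun w => U (m w)) (B ∩ T) z := hUc.comp hmc hmaps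
      have hW : ContinuousWithinAt (fun w => -(starRingEnd ℂ) (U (m w))) (B ∩ T) z :=
        (Complex.continuous_conj.continuousAt.comp_continuousWithinAt hUm).neg
      apply hW.congr
      · intro w hw
        obtain ⟨hwB, ⟨hwne, _⟩, hwS⟩ := hw
        rcases le_or_gt (‖w‖) 1 with h | h
        · have habs1 : ‖w‖ = 1 := le_antisymm h hwB
          exact key_eq w habs1 hwS
        · rw [hV w, if_neg (not_le.mpr h)]
      · rw [key_eq z h1 hzS]
    have := hA.union hB
    rw [hAB] at this
    exact this.continuousAt (by simp)
  have hVc : ∀ z : ℂ, z ∉ S → ContinuousAt V z := by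
    intro z hz
    rcases eq_or_ne (‖z‖) 1 with h | h
    · exact hcirc_cont z h hz
    · exact (hVd z h).continuousAt
  -- main statement
  intro z₀ hz₀
  rcases eq_or_ne (‖z₀‖) 1 with habs | habs
  swap
  · exact hVd z₀ habs
  have hz0ne : z₀ ≠ 0 := by
    intro h; rw [h] at habs; simp at habs
  set φ : ℂ → ℂ := fun w => z₀ * Complex.exp (Complex.I * w) with hφdef
  have hφc : Continuous φ := by
    exact continuous_const.mul (Complex.continuous_exp.comp (continuous_const.mul continuous_id))
  have hφd : ∀ w, DifferentiableAt ℂ φ w := by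
    intro w
    apply DifferentiableAt.mul (differentiableAt_const _)
    exact (Complex.differentiable_exp _).comp w
      ((differentiable_const _).mul differentiable_id w)
  have hφabs : ∀ w : ℂ, ‖φ w‖ = Real.exp (-w.im) := by
    intro w
    rw [hφdef]
    simp only [norm_mul, habs, one_mul, Complex.norm_exp]
    congr 1
    simp [Complex.mul_re]
  have hO : IsOpen (φ ⁻¹' Sᶜ) := hSclosed.isOpen_compl.preimage hφc
  have h0O : (0:ℂ) ∈ φ ⁻¹' Sᶜ := by
    simp only [Set.mem_preimage, Set.mem_compl_iff, hφdef]
    simpa using hz₀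
  obtain ⟨ε, hε0, hball⟩ := Metric.isOpen_iff.mp hO 0 h0O
  have hr0 : (0:ℝ) < ε/2 := by linarith
  have hrect_sub : Set.Ioo (-(ε/2)) (ε/2) ×ℂ Set.Ioo (-(ε/2)) (ε/2) ⊆ φ ⁻¹' Sᶜ := by
    intro ζ hζ
    apply hball
    rw [Metric.mem_ball, Complex.dist_eq, sub_zero]
    calc ‖ζ‖ ≤ |ζ.re| + |ζ.im| := Complex.norm_le_abs_re_add_abs_im ζ
      _ < ε/2 + ε/2 := by
          apply add_lt_add
          · exact abs_lt.mpr ⟨hζ.1.1, hζ.1.2⟩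
          · exact abs_lt.mpr ⟨hζ.2.1, hζ.2.2⟩
      _ = ε := by ring
  have hf0 : DifferentiableAt ℂ (fun w => V (φ w)) 0 := by
    apply morera_off_real_line hr0
    · intro ζ hζ
      exact ((hVc (φ ζ) (hrect_sub hζ)).comp hφc.continuousAt).continuousWithinAt
    · intro ζ hζ him
      have habsne : ‖φ ζ‖ ≠ 1 := by
        rw [hφabs]
        intro h
        exact him (by
          have h2 : -ζ.im = 0 := Real.exp_eq_exp.mp (by rw [h, Real.exp_zero])
          linarith)
      exact (hVd (φ ζ) habsne).comp ζ (hφd ζ)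
  set ψ : ℂ → ℂ := fun z => -Complex.I * Complex.log (z / z₀) with hψdef
  have hψz₀ : ψ z₀ = 0 := by
    rw [hψdef]
    simp [div_self hz0ne, Complex.log_one]
  have hψd : DifferentiableAt ℂ ψ z₀ := by
    apply DifferentiableAt.mul (differentiableAt_const _)
    have hdiv : DifferentiableAt ℂ (fun z : ℂ => z / z₀) z₀ := differentiableAt_id.div_const z₀
    apply hdiv.clog
    show z₀ / z₀ ∈ Complex.slitPlane
    rw [div_self hz0ne]
    simp [Complex.mem_slitPlane_iff]
  have hcomp : DifferentiableAt ℂ (fun z => V (φ (ψ z))) z₀ := by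
    have hf0' : DifferentiableAt ℂ (fun w => V (φ w)) (ψ z₀) := by rw [hψz₀]; exact hf0
    exact hf0'.comp z₀ hψd
  apply hcomp.congr_of_eventuallyEq
  have hne : {z : ℂ | z ≠ 0} ∈ nhds z₀ := isOpen_ne.mem_nhds hz0ne
  filter_upwards [hne] with z hz
  have hφψ : φ (ψ z) = z := by
    rw [hφdef, hψdef]
    simp only
    rw [show Complex.I * (-Complex.I * Complex.log (z / z₀))
        = -(Complex.I * Complex.I) * Complex.log (z / z₀) by ring]
    rw [Complex.I_mul_I]
    rw [neg_neg, one_mul]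
    rw [Complex.exp_log (div_ne_zero hz hz0ne)]
    rw [mul_comm, div_mul_cancel₀ z hz0ne]
  rw [hφψ]
end

section
/- Let ℓ ∈ (0, π/2), let E := {e^{is} : s ∈ [−ℓ/2, ℓ/2]} and −E := {−e^{is} : s ∈ [−ℓ/2, ℓ/2]} be opposite arcs of the unit circle, and let f : ℝ² → ℝ be continuously differentiable with f = 1 at every point of E and f = 0 at every point of −E. Then the Dirichlet energy of f over the open unit disk satisfies ∫_{D} ‖∇f‖² ≥ sin(ℓ/2). -/
open Real

open MeasureTheory in
private lemma key_slice (f : ℂ → ℝ) (hf : ContDiff ℝ 1 f) (y b : ℝ) (hb : 0 < b) (hb1 : b ≤ 1)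
    (h1 : f (b + y * Complex.I) = 1) (h0 : f (-b + y * Complex.I) = 0) :
    (1:ℝ)/2 ≤ ∫ x in Set.Ioo (-b) b, (fderiv ℝ f (x + y * Complex.I) 1) ^ 2 := by
  set g : ℝ → ℝ := fun t => f (t + y * Complex.I) with hg
  set d : ℝ → ℝ := fun t => fderiv ℝ f (t + y * Complex.I) 1 with hd
  have hderiv : ∀ x : ℝ, HasDerivAt g (d x) x := by
    intro x
    have hc : HasDerivAt (fun t : ℝ => (t : ℂ) + y * Complex.I) 1 x :=
      Complex.ofRealCLM.hasDerivAt.add_const _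
    exact ((hf.differentiable one_ne_zero _).hasFDerivAt.comp_hasDerivAt x hc)
  have hdc : Continuous d := by
    have h1 : Continuous (fderiv ℝ f) := hf.continuous_fderiv one_ne_zero
    have h2 : Continuous (fun t : ℝ => (t : ℂ) + y * Complex.I) := by continuity
    exact ((h1.comp h2)).clm_apply continuous_const
  have hFTC : ∫ x in (-b)..b, d x = 1 := by
    rw [intervalIntegral.integral_eq_sub_of_hasDerivAt (fun x _ => hderiv x)
      (hdc.intervalIntegrable _ _)]
    simp [hg] at *
    rw [h1]
    simp [h0]
  have hIoo : ∫ x in Set.Ioo (-b) b, d x = 1 := by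
    rw [← integral_Ioc_eq_integral_Ioo, ← intervalIntegral.integral_of_le (by linarith)]
    exact hFTC
  have hint_d : IntegrableOn d (Set.Ioo (-b) b) := by
    exact (hdc.continuousOn.integrableOn_Icc).mono_set Set.Ioo_subset_Icc_self
  have hint_d2 : IntegrableOn (fun x => d x ^ 2) (Set.Ioo (-b) b) := by
    exact ((hdc.pow 2).continuousOn.integrableOn_Icc).mono_set Set.Ioo_subset_Icc_self
  have hmono : ∫ x in Set.Ioo (-b) b, (d x / b - 1 / (4 * b ^ 2)) ≤
      ∫ x in Set.Ioo (-b) b, d x ^ 2 := by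
    apply setIntegral_mono_on
    · exact (hint_d.div_const _).sub (integrableOn_const measure_Ioo_lt_top.ne)
    · exact hint_d2
    · exact measurableSet_Ioo
    · intro x _
      have hb' : b ≠ 0 := ne_of_gt hb
      have e : d x / b - 1 / (4 * b ^ 2) = d x ^ 2 - (d x - 1 / (2 * b)) ^ 2 := by
        field_simp; ring
      rw [e]
      nlinarith [sq_nonneg (d x - 1 / (2 * b))]
  have hcomp : ∫ x in Set.Ioo (-b) b, (d x / b - 1 / (4 * b ^ 2)) = 1 / (2 * b) := by
    rw [integral_sub (hint_d.div_const _) (integrableOn_const measure_Ioo_lt_top.ne)]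
    rw [integral_div, hIoo, setIntegral_const]
    rw [measureReal_def, Real.volume_Ioo]
    have : b - -b = 2 * b := by ring
    rw [this, ENNReal.toReal_ofReal (by linarith)]
    have hb' : b ≠ 0 := ne_of_gt hb
    field_simp
    ring_nf
    rw [inv_pow, mul_inv_cancel₀ (pow_ne_zero 2 hb')]
    norm_num
  have : 1/2 ≤ 1 / (2 * b) := by
    rw [div_le_div_iff₀ (by norm_num) (by linarith)]
    linarith
  calc (1:ℝ)/2 ≤ 1 / (2*b) := this
    _ = ∫ x in Set.Ioo (-b) b, (d x / b - 1 / (4 * b ^ 2)) := hcomp.symm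
    _ ≤ _ := hmono


open MeasureTheory in
set_option maxHeartbeats 1000000 in
/-- Capacity-type lower bound: if `f : ℝ² ≅ ℂ → ℝ` is `C¹`, equal to `1` on
the arc `E = {e^{is} : |s| ≤ ℓ/2}` of the unit circle and to `0` on the
opposite arc `-E`, then the Dirichlet energy of `f` on the unit disk is at
least `sin (ℓ/2)`. -/
theorem dirichlet_energy_lower_bound
    (ℓ : ℝ) (hℓ : ℓ ∈ Set.Ioo 0 (π / 2))
    (f : ℂ → ℝ) (hf : ContDiff ℝ 1 f)
    (hE : ∀ s ∈ Set.Icc (-(ℓ / 2)) (ℓ / 2),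
      f (Complex.exp (s * Complex.I)) = 1)
    (hE' : ∀ s ∈ Set.Icc (-(ℓ / 2)) (ℓ / 2),
      f (-Complex.exp (s * Complex.I)) = 0) :
    Real.sin (ℓ / 2) ≤ ∫ z in Metric.ball (0 : ℂ) 1, ‖fderiv ℝ f z‖ ^ 2 := by
  obtain ⟨hℓ0, hℓπ⟩ := hℓ
  set a : ℝ := Real.sin (ℓ / 2) with ha
  have hℓ2 : (0:ℝ) < ℓ / 2 := by linarith
  have hℓ2' : ℓ / 2 < π / 2 := by linarith
  have ha0 : 0 < a := Real.sin_pos_of_pos_of_lt_pi hℓ2 (by linarith [Real.pi_pos])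
  have ha1 : a ≤ 1 := Real.sin_le_one _
  -- the squared x-derivative
  set G : ℂ → ℝ := fun z => (fderiv ℝ f z 1) ^ 2 with hG
  have hfd_cont : Continuous (fderiv ℝ f) := hf.continuous_fderiv one_ne_zero
  have hG_cont : Continuous G := (hfd_cont.clm_apply continuous_const).pow 2
  have hG_nonneg : ∀ z, 0 ≤ G z := fun z => sq_nonneg _
  -- integrabilities on the ball
  have h_en_int : IntegrableOn (fun z : ℂ => ‖fderiv ℝ f z‖ ^ 2) (Metric.ball 0 1) := by
    refine (((hfd_cont.norm.pow 2).continuousOn).integrableOn_compact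
      (isCompact_closedBall (0:ℂ) 1)).mono_set Metric.ball_subset_closedBall
  have hG_int : IntegrableOn G (Metric.ball 0 1) := by
    refine ((hG_cont.continuousOn).integrableOn_compact
      (isCompact_closedBall (0:ℂ) 1)).mono_set Metric.ball_subset_closedBall
  -- step 1 : pointwise bound
  have step1 : ∫ z in Metric.ball (0:ℂ) 1, G z ≤
      ∫ z in Metric.ball (0:ℂ) 1, ‖fderiv ℝ f z‖ ^ 2 := by
    refine setIntegral_mono_on hG_int h_en_int measurableSet_ball ?_
    intro z _
    have h := (fderiv ℝ f z).le_opNorm 1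
    simp only [norm_one, mul_one] at h
    calc G z = ‖fderiv ℝ f z 1‖ ^ 2 := (sq_abs _).symm
      _ ≤ ‖fderiv ℝ f z‖ ^ 2 := pow_le_pow_left₀ (norm_nonneg _) h 2
  -- the transport map
  set T : ℝ × ℝ ≃ᵐ ℂ :=
    (MeasurableEquiv.prodComm : (ℝ × ℝ) ≃ᵐ (ℝ × ℝ)).trans Complex.measurableEquivRealProd.symm with hT
  have hT_apply : ∀ p : ℝ × ℝ, T p = (p.2 : ℂ) + (p.1 : ℝ) * Complex.I := by
    intro p
    apply Complex.ext <;>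
      simp [hT, Complex.measurableEquivRealProd_symm_apply, MeasurableEquiv.prodComm]
  have hT_mp : MeasurePreserving T (volume.prod volume) volume :=
    (Complex.volume_preserving_equiv_real_prod.symm _).comp Measure.measurePreserving_swap
  set S : Set (ℝ × ℝ) := T ⁻¹' (Metric.ball 0 1) with hS
  have hS_meas : MeasurableSet S := measurableSet_ball.preimage T.measurable
  -- transport the integral
  have step2 : ∫ p in S, G (T p) ∂(volume.prod volume) = ∫ z in Metric.ball (0:ℂ) 1, G z :=
    hT_mp.setIntegral_preimage_emb T.measurableEmbedding _ _
  have hT_cont : Continuous (fun p : ℝ × ℝ => (T p : ℂ)) := by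
    have : (fun p : ℝ × ℝ => (T p : ℂ)) =
        fun p : ℝ × ℝ => (p.2 : ℂ) + (p.1 : ℝ) * Complex.I := funext hT_apply
    rw [this]; continuity
  have hGT_int : IntegrableOn (fun p => G (T p)) S (volume.prod volume) := by
    have hsub : S ⊆ Set.Icc ((-1, -1) : ℝ × ℝ) ((1, 1) : ℝ × ℝ) := by
      rintro ⟨y, x⟩ hp
      have hball : T (y, x) ∈ Metric.ball (0:ℂ) 1 := hp
      rw [Metric.mem_ball, dist_zero_right, hT_apply] at hball
      have hre : |x| ≤ 1 := by
        have := Complex.abs_re_le_norm ((x:ℂ) + (y:ℝ) * Complex.I)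
        simp at this
        calc |x| = |((x:ℂ) + (y:ℝ) * Complex.I).re| := by simp
          _ ≤ ‖(x:ℂ) + (y:ℝ) * Complex.I‖ := Complex.abs_re_le_norm _
          _ ≤ 1 := le_of_lt hball
      have him : |y| ≤ 1 := by
        calc |y| = |((x:ℂ) + (y:ℝ) * Complex.I).im| := by simp
          _ ≤ ‖(x:ℂ) + (y:ℝ) * Complex.I‖ := Complex.abs_im_le_norm _
          _ ≤ 1 := le_of_lt hball
      rw [abs_le] at hre him
      exact ⟨⟨him.1, hre.1⟩, ⟨him.2, hre.2⟩⟩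
    have hvol : (volume : Measure (ℝ × ℝ)) = volume.prod volume :=
      (MeasureTheory.Measure.volume_eq_prod ℝ ℝ)
    rw [← hvol]
    refine (((hG_cont.comp hT_cont).continuousOn.integrableOn_compact
      isCompact_Icc).mono_set hsub)
  have h_ind_int : Integrable (S.indicator fun p => G (T p)) (volume.prod volume) :=
    hGT_int.integrable_indicator hS_meas
  -- Fubini
  have step3 : ∫ p, S.indicator (fun p => G (T p)) p ∂(volume.prod volume) =
      ∫ y : ℝ, ∫ x : ℝ, S.indicator (fun p => G (T p)) (y, x) :=
    integral_prod _ h_ind_int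
  set J : ℝ → ℝ := fun y => ∫ x : ℝ, S.indicator (fun p => G (T p)) (y, x) with hJ
  have hJ_nonneg : ∀ y, 0 ≤ J y := fun y =>
    integral_nonneg fun x => Set.indicator_nonneg (fun p _ => hG_nonneg (T p)) _
  have hJ_int : Integrable J := h_ind_int.integral_prod_left
  -- section description and the slice bound
  have hsec : ∀ y ∈ Set.Ioo (-a) a, (1:ℝ)/2 ≤ J y := by
    intro y hy
    have hy2 : y ^ 2 < 1 := by
      rcases hy with ⟨hy1, hy2⟩
      nlinarith
    set b : ℝ := Real.sqrt (1 - y ^ 2) with hbdef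
    have hb_pos : 0 < b := Real.sqrt_pos.2 (by linarith)
    have hb_le : b ≤ 1 := by
      have h' : b ≤ Real.sqrt 1 := Real.sqrt_le_sqrt (by nlinarith)
      simpa using h'
    have hb_sq : b ^ 2 = 1 - y ^ 2 := Real.sq_sqrt (by linarith)
    -- boundary values
    have hy_icc : y ∈ Set.Icc (-1:ℝ) 1 := ⟨by nlinarith, by nlinarith⟩
    have hs_mem : Real.arcsin y ∈ Set.Icc (-(ℓ/2)) (ℓ/2) := by
      constructor
      · have := (Real.le_arcsin_iff_sin_le' (by constructor <;> linarith)).2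
          (le_of_lt (show Real.sin (-(ℓ/2)) < y by rw [Real.sin_neg]; linarith [hy.1]))
        linarith [this]
      · exact (Real.arcsin_le_iff_le_sin hy_icc ⟨by linarith, by linarith⟩).2 (le_of_lt hy.2)
    have hexp : ∀ s : ℝ, Complex.exp (s * Complex.I) =
        (Real.cos s : ℂ) + (Real.sin s : ℂ) * Complex.I := by
      intro s
      rw [Complex.exp_mul_I, Complex.ofReal_cos, Complex.ofReal_sin]
    have hsin : Real.sin (Real.arcsin y) = y := Real.sin_arcsin hy_icc.1 hy_icc.2
    have hcos : Real.cos (Real.arcsin y) = b := by rw [Real.cos_arcsin]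
    have h1 : f ((b:ℂ) + y * Complex.I) = 1 := by
      have := hE (Real.arcsin y) hs_mem
      rwa [hexp, hsin, hcos] at this
    have h0 : f (-(b:ℂ) + y * Complex.I) = 0 := by
      have hmem : Real.arcsin (-y) ∈ Set.Icc (-(ℓ/2)) (ℓ/2) := by
        rw [Real.arcsin_neg]
        constructor <;> [linarith [hs_mem.2]; linarith [hs_mem.1]]
      have := hE' (Real.arcsin (-y)) hmem
      rw [hexp, Real.arcsin_neg, Real.sin_neg, Real.cos_neg, hsin, hcos] at this
      rw [← this]
      congr 1
      push_cast
      ring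
    -- the section of S
    have hsec_eq : ∀ x : ℝ, ((y, x) ∈ S ↔ x ∈ Set.Ioo (-b) b) := by
      intro x
      rw [hS, Set.mem_preimage, Metric.mem_ball, dist_zero_right, hT_apply]
      simp only [Set.mem_Ioo]
      have hnorm : ‖(x:ℂ) + (y:ℝ) * Complex.I‖ ^ 2 = x ^ 2 + y ^ 2 := by
        rw [Complex.sq_norm, Complex.normSq_apply]
        simp
        ring
      constructor
      · intro h
        have h2 : x ^ 2 + y ^ 2 < 1 := by
          have := pow_lt_pow_left₀ h (norm_nonneg _) (by norm_num : (2:ℕ) ≠ 0)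
          rw [hnorm] at this; simpa using this
        have hx2 : x ^ 2 < b ^ 2 := by rw [hb_sq]; linarith
        constructor <;> nlinarith
      · rintro ⟨hx1, hx2⟩
        have hx2' : x ^ 2 < b ^ 2 := by nlinarith
        have h2 : ‖(x:ℂ) + (y:ℝ) * Complex.I‖ ^ 2 < 1 := by rw [hnorm]; nlinarith
        nlinarith [norm_nonneg ((x:ℂ) + (y:ℝ) * Complex.I)]
    have hJy : J y = ∫ x in Set.Ioo (-b) b, G ((x:ℂ) + y * Complex.I) := by
      have : (fun x : ℝ => S.indicator (fun p => G (T p)) (y, x)) =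
          (Set.Ioo (-b) b).indicator (fun x : ℝ => G ((x:ℂ) + y * Complex.I)) := by
        funext x
        by_cases hx : (y, x) ∈ S
        · rw [Set.indicator_of_mem hx, Set.indicator_of_mem ((hsec_eq x).1 hx), hT_apply]
        · rw [Set.indicator_of_notMem hx,
            Set.indicator_of_notMem (fun h => hx ((hsec_eq x).2 h))]
      show (∫ x : ℝ, S.indicator (fun p => G (T p)) (y, x)) = _
      rw [this, integral_indicator measurableSet_Ioo]
    rw [hJy]
    exact key_slice f hf y b hb_pos hb_le h1 h0
  -- put everything together
  have hJ_intOn : IntegrableOn J (Set.Ioo (-a) a) := hJ_int.integrableOn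
  have step4 : ∫ y in Set.Ioo (-a) a, (1:ℝ)/2 ≤ ∫ y in Set.Ioo (-a) a, J y :=
    setIntegral_mono_on (integrableOn_const measure_Ioo_lt_top.ne) hJ_intOn
      measurableSet_Ioo hsec
  have step5 : ∫ y in Set.Ioo (-a) a, J y ≤ ∫ y, J y :=
    setIntegral_le_integral hJ_int (Filter.Eventually.of_forall hJ_nonneg)
  have hconst : ∫ y in Set.Ioo (-a) a, (1:ℝ)/2 = a := by
    rw [setIntegral_const, measureReal_def, Real.volume_Ioo, show a - -a = 2 * a by ring,
      ENNReal.toReal_ofReal (by linarith)]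
    simp
    ring
  calc a = ∫ y in Set.Ioo (-a) a, (1:ℝ)/2 := hconst.symm
    _ ≤ ∫ y in Set.Ioo (-a) a, J y := step4
    _ ≤ ∫ y, J y := step5
    _ = ∫ p, S.indicator (fun p => G (T p)) p ∂(volume.prod volume) := step3.symm
    _ = ∫ p in S, G (T p) ∂(volume.prod volume) := integral_indicator hS_meas
    _ = ∫ z in Metric.ball (0:ℂ) 1, G z := step2
    _ ≤ _ := step1
end

section
/- Let F : ℂ → ℂ be differentiable at every point with derivative F′(z) = exp(−sinh z) for all z ∈ ℂ. Then for every z ∈ ℂ, F(z + 2πi) − F(z) = i · ∫₀^{2π} exp(−i·sin s) ds; in particular this difference is a constant independent of z. -/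
open Real

/-- If `F' (z) = exp (-sinh z)` everywhere, then
`F (z + 2πi) - F z = i ∫₀^{2π} exp (-i sin s) ds`, a constant independent
of `z`. -/
theorem period_of_antiderivative
    (F : ℂ → ℂ)
    (hF : ∀ z : ℂ, HasDerivAt F (Complex.exp (-Complex.sinh z)) z) :
    ∀ z : ℂ, F (z + 2 * π * Complex.I) - F z =
      Complex.I * ∫ s in (0:ℝ)..(2 * π),
        Complex.exp (-(Complex.I * Real.sin s)) := by
  -- sinh has period 2πI
  have hper : ∀ w : ℂ, Complex.sinh (w + 2 * π * Complex.I) = Complex.sinh w := by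
    intro w
    have h2 : (2 * π * Complex.I : ℂ) = (2 * π : ℂ) * Complex.I := by ring
    rw [h2, Complex.sinh_add, Complex.sinh_mul_I, Complex.cosh_mul_I,
      Complex.sin_two_pi, Complex.cos_two_pi]
    ring
  -- the difference G is constant
  set G : ℂ → ℂ := fun z => F (z + 2 * π * Complex.I) - F z with hGdef
  have hG : ∀ w : ℂ, HasDerivAt G 0 w := by
    intro w
    have h1 : HasDerivAt (fun z : ℂ => F (z + 2 * π * Complex.I))
        (Complex.exp (-Complex.sinh (w + 2 * π * Complex.I))) w := by
      have := (hF (w + 2 * π * Complex.I)).comp w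
        ((hasDerivAt_id w).add_const (2 * π * Complex.I))
      simpa [Function.comp_def] using this
    have := h1.sub (hF w)
    simp [hper w] at this
    exact this
  have hfd : ∀ w : ℂ, HasFDerivAt G (0 : ℂ →L[ℝ] ℂ) w := by
    intro w
    have h := ((hG w).hasFDerivAt).restrictScalars ℝ
    refine h.congr_fderiv ?_
    ext x
    simp
  have hconst : ∀ z : ℂ, G z = G 0 := fun z =>
    is_const_of_fderiv_eq_zero (fun w => (hfd w).differentiableAt)
      (fun w => (hfd w).fderiv) z 0
  -- evaluate G 0 via the integral
  have hderiv : ∀ t : ℝ, HasDerivAt (fun t : ℝ => F ((t : ℂ) * Complex.I))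
      (Complex.I * Complex.exp (-(Complex.I * Real.sin t))) t := by
    intro t
    have hg : HasDerivAt (fun t : ℝ => (t : ℂ) * Complex.I) Complex.I t := by
      simpa using (Complex.ofRealCLM.hasDerivAt (x := t)).mul_const Complex.I
    have := (hF ((t : ℂ) * Complex.I)).scomp t hg
    have hs : Complex.sinh ((t : ℂ) * Complex.I) = Complex.I * Real.sin t := by
      rw [Complex.sinh_mul_I, Complex.ofReal_sin]
      ring
    simpa [hs, smul_eq_mul, Function.comp_def] using this
  have hcont : Continuous fun t : ℝ => Complex.I * Complex.exp (-(Complex.I * Real.sin t)) := by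
    fun_prop
  have hint := intervalIntegral.integral_eq_sub_of_hasDerivAt
    (f := fun t : ℝ => F ((t : ℂ) * Complex.I))
    (f' := fun t : ℝ => Complex.I * Complex.exp (-(Complex.I * Real.sin t)))
    (fun t _ => hderiv t) (hcont.intervalIntegrable 0 (2 * π))
  intro z
  have hGz := hconst z
  simp only [hGdef] at hGz
  rw [hGz]
  rw [intervalIntegral.integral_const_mul] at hint
  rw [hint]
  simp
end
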